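/- arXiv:2403.10738 — 12 statements merged into one kernel-verified Lean document; each statement's English description precedes it below -/
import Mathlib

section
/- Let d ≥ 1 and let Φ be a nonempty compact convex subset of ℝ^d. Define Φ* = { ψ ∈ ℝ^d : ⟨φ, ψ⟩ ≥ 0 for all φ ∈ Φ }. Then there exists a single point φ̄ ∈ Φ such that for every ψ ∈ Φ*, ⟨φ̄, ψ⟩ ≥ (1/(2d)) · max_{φ ∈ Φ} ⟨φ, ψ⟩. -/
open scoped RealInnerProductSpace

/-- For a nonempty compact convex set `Φ ⊆ ℝ^d`, there is a single point `φ̄ ∈ Φ` such that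
for every `ψ` in the dual cone `Φ* = {ψ | ⟨φ, ψ⟩ ≥ 0 ∀ φ ∈ Φ}` and every `φ ∈ Φ`,
`⟨φ̄, ψ⟩ ≥ (1/(2d)) ⟨φ, ψ⟩`. -/
theorem exists_center_of_dual_cone (d : ℕ) (hd : 1 ≤ d)
    (Φ : Set (EuclideanSpace ℝ (Fin d))) (hne : Φ.Nonempty)
    (hcomp : IsCompact Φ) (hconv : Convex ℝ Φ) :
    ∃ φbar ∈ Φ, ∀ ψ : EuclideanSpace ℝ (Fin d),
      (∀ φ ∈ Φ, 0 ≤ ⟪φ, ψ⟫) → ∀ φ ∈ Φ, (1 / (2 * d)) * ⟪φ, ψ⟫ ≤ ⟪φbar, ψ⟫ := by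
  classical
  obtain ⟨w, hw⟩ := hne
  let E := EuclideanSpace ℝ (Fin d)
  set c : ℝ := 1 / (2 * d) with hc
  have hd1 : (1:ℝ) ≤ d := by exact_mod_cast hd
  have hc0 : 0 < c := by positivity
  have hc1 : c ≤ 1/2 := by
    rw [hc, div_le_div_iff₀ (by linarith) (by norm_num)]; linarith
  have hc1' : (0:ℝ) < 1 - c := by linarith
  set F : Φ → Set E :=
    fun φ => (fun y : E => c • (φ : E) + (1 - c) • y) '' Φ with hF
  have key : (⋂ i, F i).Nonempty := by
    apply Convex.helly_theorem_compact' (𝕜 := ℝ)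
    · rintro i x ⟨y, hy, rfl⟩ z ⟨u, hu, rfl⟩ a b ha hb hab
      refine ⟨a • y + b • u, hconv hy hu ha hb hab, ?_⟩
      rw [show b = 1 - a by linarith]
      module
    · intro i
      exact hcomp.image (continuous_const.add (continuous_const_smul _))
    · intro I hIcard
      rcases I.eq_empty_or_nonempty with rfl | ⟨i0, hi0⟩
      · simp
      have hIcard' : (I.card : ℝ) ≤ d + 1 := by
        rw [finrank_euclideanSpace_fin] at hIcard
        exact_mod_cast hIcard
      have hI1 : 1 ≤ I.card := Finset.card_pos.mpr ⟨i0, hi0⟩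
      set S : E := ∑ j ∈ I, (j : E) with hS
      refine ⟨c • S + (1 - I.card * c) • w, ?_⟩
      simp only [Set.mem_iInter]
      intro i hi
      have hBnn : 0 ≤ 1 - I.card * c := by
        have h1 : (I.card : ℝ) * c ≤ (d+1) * (1/(2*d)) :=
          mul_le_mul_of_nonneg_right hIcard' hc0.le
        have h2 : (d+1) * (1/(2*(d:ℝ))) ≤ 1 := by
          rw [mul_one_div, div_le_one (by linarith)]; linarith
        rw [hc] at h1 ⊢
        linarith
      set y : E := (1/(1-c)) • (c • (S - (i : E)) + (1 - I.card * c) • w) with hy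
      have hocc : (1-c) * (1/(1-c)) = 1 := by field_simp
      have hxy : c • S + (1 - I.card * c) • w = c • (i : E) + (1-c) • y := by
        rw [hy, smul_smul, hocc, one_smul]
        module
      have hyΦ : y ∈ Φ := by
        rcases eq_or_lt_of_le hI1 with h1 | h1
        · -- I = {i}
          have hsing : I = {i} := Finset.eq_singleton_iff_unique_mem.mpr
            ⟨hi, fun j hj => Finset.card_le_one.mp (le_of_eq h1.symm) j hj i hi⟩
          subst hsing
          have hSi : S = (i : E) := by simp [hS]
          have hyw : y = w := by
            rw [hy, hSi]
            simp only [sub_self, smul_zero, zero_add, Finset.card_singleton,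
              Nat.cast_one, one_mul, smul_smul]
            rw [mul_comm, mul_one_div, div_self hc1'.ne', one_smul]
          rw [hyw]; exact hw
        · -- I.card ≥ 2
          set m : ℕ := I.card - 1 with hm
          have hmcard : (I.erase i).card = m := by rw [Finset.card_erase_of_mem hi]
          have hm1 : 1 ≤ m := by omega
          have hmR : (0:ℝ) < m := by exact_mod_cast hm1
          have hIm : (I.card : ℝ) = m + 1 := by
            rw [hm]; push_cast [Nat.cast_sub hI1]; ring
          have havg : (1/(m:ℝ)) • (S - (i : E)) ∈ Φ := by
            have hSe : S - (i : E) = ∑ j ∈ I.erase i, (j : E) := by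
              rw [hS, eq_comm, Finset.sum_erase_eq_sub hi]
            rw [hSe, Finset.smul_sum]
            apply hconv.sum_mem (fun j _ => by positivity)
            · rw [Finset.sum_const, hmcard, nsmul_eq_mul, mul_one_div,
                div_self hmR.ne']
            · exact fun j _ => j.2
          have hcomb := hconv havg hw
            (a := (m * c)/(1-c)) (b := (1 - I.card * c)/(1-c))
            (by positivity) (by positivity)
            (by rw [← add_div, hIm]; field_simp; ring)
          convert hcomb using 1
          rw [hy, hIm]
          match_scalars <;> (field_simp; try ring)
      exact ⟨y, hyΦ, hxy.symm⟩
  obtain ⟨φbar, hφbar⟩ := key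
  rw [Set.mem_iInter] at hφbar
  have hmem : ∀ φ (hφ : φ ∈ Φ), ∃ y ∈ Φ, φbar = c • φ + (1-c) • y := by
    intro φ hφ
    obtain ⟨y, hy, hEq⟩ := hφbar ⟨φ, hφ⟩
    exact ⟨y, hy, hEq.symm⟩
  obtain ⟨y0, hy0, hEq0⟩ := hmem w hw
  have hφbarΦ : φbar ∈ Φ := by
    rw [hEq0]
    exact hconv hw hy0 hc0.le (by linarith) (by ring)
  refine ⟨φbar, hφbarΦ, ?_⟩
  intro ψ hψ φ hφ
  obtain ⟨y, hy, hEq⟩ := hmem φ hφ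
  have h1 : ⟪φbar, ψ⟫ = c * ⟪φ, ψ⟫ + (1-c) * ⟪y, ψ⟫ := by
    rw [hEq, inner_add_left, real_inner_smul_left, real_inner_smul_left]
  have h2 : 0 ≤ ⟪y, ψ⟫ := hψ y hy
  have h3 := mul_nonneg hc1'.le h2
  linarith [h1.ge]
end

section
/- Let d ≥ 1 and let Φ be a compact convex subset of ℝ^d with nonempty interior. Let φ̄ = (∫_Φ x dx) / vol(Φ) be the barycenter of Φ with respect to Lebesgue measure. Then for every ψ ∈ ℝ^d satisfying ⟨φ, ψ⟩ ≥ 0 for all φ ∈ Φ, one has ⟨φ̄, ψ⟩ ≥ (1/(d+1)) · max_{φ ∈ Φ} ⟨φ, ψ⟩. -/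
open scoped RealInnerProductSpace
open MeasureTheory

/-- For a compact convex `Φ ⊆ ℝ^d` with nonempty interior, the Lebesgue barycenter
`φ̄ = (∫_Φ x dx)/vol(Φ)` satisfies `⟨φ̄, ψ⟩ ≥ (1/(d+1)) max_{φ∈Φ} ⟨φ, ψ⟩` for every `ψ`
in the dual cone of `Φ`. -/
theorem barycenter_dual_cone (d : ℕ) (hd : 1 ≤ d)
    (Φ : Set (EuclideanSpace ℝ (Fin d)))
    (hcomp : IsCompact Φ) (hconv : Convex ℝ Φ) (hint : (interior Φ).Nonempty)
    (φbar : EuclideanSpace ℝ (Fin d))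
    (hbar : φbar = (volume Φ).toReal⁻¹ • ∫ x in Φ, x) :
    ∀ ψ : EuclideanSpace ℝ (Fin d),
      (∀ φ ∈ Φ, 0 ≤ ⟪φ, ψ⟫) → ∀ φ ∈ Φ, (1 / (d + 1)) * ⟪φ, ψ⟫ ≤ ⟪φbar, ψ⟫ := by
  intro ψ hψ φ hφ
  set f : EuclideanSpace ℝ (Fin d) → ℝ := fun x => ⟪x, ψ⟫ with hf
  set V : ℝ := (volume Φ).toReal with hVdef
  set I : ℝ := ∫ x in Φ, f x with hI
  have hΦmeas : MeasurableSet Φ := hcomp.measurableSet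
  have hV : 0 < V := by
    apply ENNReal.toReal_pos
    · exact ((isOpen_interior.measure_pos volume hint).trans_le (measure_mono interior_subset)).ne'
    · exact hcomp.measure_lt_top.ne
  have hfc : Continuous f := continuous_id.inner continuous_const
  have hfint : IntegrableOn f Φ := hfc.continuousOn.integrableOn_compact hcomp
  have hidint : IntegrableOn (fun x : EuclideanSpace ℝ (Fin d) => x) Φ :=
    continuous_id.continuousOn.integrableOn_compact hcomp
  -- the barycenter pairing equals V⁻¹ * I
  have hbarψ : ⟪φbar, ψ⟫ = V⁻¹ * I := by
    rw [hbar, real_inner_smul_left]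
    congr 1
    rw [real_inner_comm, ← integral_inner hidint ψ]
    exact integral_congr_ae (Filter.Eventually.of_forall fun x => real_inner_comm _ _)
  rw [hbarψ]
  -- the key inequality for every l ∈ (0,1)
  have key : ∀ l ∈ Set.Ioo (0:ℝ) 1,
      l ^ d * (f φ * V) ≤ (∑ k ∈ Finset.range (d + 1), l ^ k) * I := by
    intro l hl
    obtain ⟨hl0, hl1⟩ := hl
    set g : EuclideanSpace ℝ (Fin d) → ℝ := Set.indicator Φ f with hg
    have hgint : Integrable g := hfint.integrable_indicator hΦmeas
    have hintg : ∫ x, g x = I := by rw [hg, integral_indicator hΦmeas]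
    set c : EuclideanSpace ℝ (Fin d) := φ - l • φ with hc
    -- change of variables
    have hcv : ∫ x, g (l • x + c) = (l ^ d)⁻¹ * ∫ x, g x := by
      have h1 : ∫ x, (fun y => g (y + c)) (l • x)
          = |(l ^ Module.finrank ℝ (EuclideanSpace ℝ (Fin d)))⁻¹| • ∫ x, g (x + c) :=
        Measure.integral_comp_smul volume (fun y => g (y + c)) l
      have h2 : ∫ x, g (x + c) = ∫ x, g x := integral_add_right_eq_self g c
      have h3 : Module.finrank ℝ (EuclideanSpace ℝ (Fin d)) = d := finrank_euclideanSpace_fin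
      rw [show (fun x => g (l • x + c)) = fun x => (fun y => g (y + c)) (l • x) from rfl]
      rw [h1, h2, h3, abs_of_nonneg (inv_nonneg.2 (pow_nonneg hl0.le _)), smul_eq_mul]
    have hgTint : Integrable fun x => g (l • x + c) :=
      ((hgint.comp_add_right c).comp_smul hl0.ne')
    have hgnn : 0 ≤ᵐ[volume] fun x => g (l • x + c) :=
      Filter.Eventually.of_forall fun x => Set.indicator_nonneg (fun y hy => hψ y hy) _
    -- restrict to Φ
    have hsub : ∫ x in Φ, g (l • x + c) ≤ ∫ x, g (l • x + c) :=
      setIntegral_le_integral hgTint hgnn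
    -- on Φ the integrand is the affine expression
    have hcongr : ∫ x in Φ, g (l • x + c) = ∫ x in Φ, (l * f x + (1 - l) * f φ) := by
      apply setIntegral_congr_fun hΦmeas
      intro x hx
      have hmem : l • x + c ∈ Φ := by
        have h := hconv hφ hx (by linarith : (0:ℝ) ≤ 1 - l) hl0.le (by ring)
        have heq : l • x + c = (1 - l) • φ + l • x := by rw [hc]; module
        rwa [heq]
      show g (l • x + c) = l * f x + (1 - l) * f φ
      rw [hg, Set.indicator_of_mem hmem, hf]
      show ⟪l • x + c, ψ⟫ = l * ⟪x, ψ⟫ + (1 - l) * ⟪φ, ψ⟫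
      rw [hc, inner_add_left, inner_sub_left, real_inner_smul_left, real_inner_smul_left]
      ring
    have hval : ∫ x in Φ, (l * f x + (1 - l) * f φ) = l * I + (1 - l) * (f φ * V) := by
      rw [integral_add (hfint.const_mul l) (integrableOn_const hcomp.measure_lt_top.ne),
        integral_const_mul, setIntegral_const, smul_eq_mul]
      rw [← hI, measureReal_def, ← hVdef]
      ring
    have hmain : l * I + (1 - l) * (f φ * V) ≤ (l ^ d)⁻¹ * I := by
      calc l * I + (1 - l) * (f φ * V) = ∫ x in Φ, g (l • x + c) := by
            rw [hcongr, hval]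
        _ ≤ ∫ x, g (l • x + c) := hsub
        _ = (l ^ d)⁻¹ * I := by rw [hcv, hintg]
    -- multiply through by l^d and rearrange
    have hld : (0:ℝ) < l ^ d := pow_pos hl0 d
    have hmain' : l ^ (d + 1) * I + l ^ d * (1 - l) * (f φ * V) ≤ I := by
      have := mul_le_mul_of_nonneg_left hmain hld.le
      calc l ^ (d + 1) * I + l ^ d * (1 - l) * (f φ * V)
          = l ^ d * (l * I + (1 - l) * (f φ * V)) := by ring
        _ ≤ l ^ d * ((l ^ d)⁻¹ * I) := this
        _ = I := by field_simp
    have hgeom : (1 : ℝ) - l ^ (d + 1) = (1 - l) * ∑ k ∈ Finset.range (d + 1), l ^ k := by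
      have := geom_sum_mul l (d + 1)
      nlinarith [this]
    have h1l : (0:ℝ) < 1 - l := by linarith
    have : l ^ d * (1 - l) * (f φ * V) ≤ (1 - l) * ((∑ k ∈ Finset.range (d + 1), l ^ k) * I) := by
      calc l ^ d * (1 - l) * (f φ * V) ≤ I - l ^ (d + 1) * I := by linarith
        _ = (1 - l ^ (d + 1)) * I := by ring
        _ = (1 - l) * ((∑ k ∈ Finset.range (d + 1), l ^ k) * I) := by rw [hgeom]; ring
    exact le_of_mul_le_mul_left
      (by calc (1 - l) * (l ^ d * (f φ * V)) = l ^ d * (1 - l) * (f φ * V) := by ring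
          _ ≤ (1 - l) * ((∑ k ∈ Finset.range (d + 1), l ^ k) * I) := this) h1l
  -- take the limit l → 1⁻
  have hNeBot : (nhdsWithin (1:ℝ) (Set.Ioo 0 1)).NeBot := by
    apply mem_closure_iff_nhdsWithin_neBot.mp
    rw [closure_Ioo (by norm_num : (0:ℝ) ≠ 1)]
    exact ⟨by norm_num, le_refl 1⟩
  have hlim : f φ * V ≤ (d + 1 : ℝ) * I := by
    have hT1 : Filter.Tendsto (fun l : ℝ => l ^ d * (f φ * V))
        (nhdsWithin 1 (Set.Ioo 0 1)) (nhds (f φ * V)) := by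
      have : Filter.Tendsto (fun l : ℝ => l ^ d * (f φ * V)) (nhds 1)
          (nhds (1 ^ d * (f φ * V))) := ((continuous_pow d).mul continuous_const).tendsto 1
      simpa using this.mono_left nhdsWithin_le_nhds
    have hT2 : Filter.Tendsto (fun l : ℝ => (∑ k ∈ Finset.range (d + 1), l ^ k) * I)
        (nhdsWithin 1 (Set.Ioo 0 1)) (nhds ((d + 1 : ℝ) * I)) := by
      have hc : Continuous fun l : ℝ => (∑ k ∈ Finset.range (d + 1), l ^ k) * I :=
        (continuous_finset_sum _ fun k _ => continuous_pow k).mul continuous_const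
      have := (hc.tendsto 1).mono_left
        (nhdsWithin_le_nhds (s := Set.Ioo (0:ℝ) 1))
      simpa using this
    exact le_of_tendsto_of_tendsto hT1 hT2
      (Filter.eventually_of_mem self_mem_nhdsWithin fun l hl => key l hl)
  -- conclude
  have hd1 : (0:ℝ) < (d:ℝ) + 1 := by positivity
  rw [div_mul_eq_mul_div, div_le_iff₀ hd1, one_mul, ← mul_le_mul_iff_of_pos_right hV]
  calc (⟪φ, ψ⟫ : ℝ) * V ≤ (d + 1 : ℝ) * I := hlim
    _ = V⁻¹ * I * (↑d + 1) * V := by field_simp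
end

section
/- Let d ≥ 1, let Φ be a nonempty compact convex subset of ℝ^d, let ψ ∈ ℝ^d, and let l = max_{φ ∈ Φ} ⟨φ, ψ⟩. For w ∈ ℝ define the slice V(w) = { φ ∈ Φ : ⟨φ, ψ⟩ = w }. Then for all real numbers x, y with 0 < x ≤ y, the (d−1)-dimensional Hausdorff measures of the slices satisfy H^{d−1}(V(l − x)) ≥ (x/y)^{d−1} · H^{d−1}(V(l − y)). -/
open scoped RealInnerProductSpace
open MeasureTheory

/-- Slice-measure inequality: for a nonempty compact convex `Φ ⊆ ℝ^d`, `ψ ∈ ℝ^d`,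
`l = max_{φ∈Φ} ⟨φ, ψ⟩` and slices `V(w) = {φ ∈ Φ | ⟨φ, ψ⟩ = w}`, for `0 < x ≤ y` the
`(d-1)`-dimensional Hausdorff measures satisfy
`H^{d-1}(V(l-x)) ≥ (x/y)^{d-1} · H^{d-1}(V(l-y))`. -/
theorem slice_measure_ineq (d : ℕ) (hd : 1 ≤ d)
    (Φ : Set (EuclideanSpace ℝ (Fin d))) (hne : Φ.Nonempty)
    (hcomp : IsCompact Φ) (hconv : Convex ℝ Φ)
    (ψ : EuclideanSpace ℝ (Fin d)) (l : ℝ)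
    (hl : IsGreatest ((fun φ => ⟪φ, ψ⟫) '' Φ) l)
    (V : ℝ → Set (EuclideanSpace ℝ (Fin d)))
    (hV : ∀ w, V w = {φ ∈ Φ | ⟪φ, ψ⟫ = w}) :
    ∀ x y : ℝ, 0 < x → x ≤ y →
      ENNReal.ofReal ((x / y) ^ (d - 1)) * μH[(d : ℝ) - 1] (V (l - y))
        ≤ μH[(d : ℝ) - 1] (V (l - x)) := by
  intro x y hx hxy
  have hy : 0 < y := hx.trans_le hxy
  obtain ⟨φ₀, hφ₀Φ, hφ₀l'⟩ := hl.1
  have hφ₀l : ⟪φ₀, ψ⟫ = l := hφ₀l'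
  set t : ℝ := x / y with ht
  have ht0 : 0 < t := div_pos hx hy
  have ht1 : t ≤ 1 := (div_le_one hy).mpr hxy
  set c : ℝ := y / x with hc
  have hc0 : 0 < c := div_pos hy hx
  have hct : c * t = 1 := by rw [hc, ht]; field_simp
  set S : EuclideanSpace ℝ (Fin d) → EuclideanSpace ℝ (Fin d) :=
    fun φ => φ₀ + c • (φ - φ₀) with hSdef
  have hS : LipschitzWith ⟨c, hc0.le⟩ S := by
    apply LipschitzWith.of_dist_le_mul
    intro a b
    simp only [hSdef, dist_eq_norm]
    have : φ₀ + c • (a - φ₀) - (φ₀ + c • (b - φ₀)) = c • (a - b) := by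
      module
    rw [this, norm_smul]
    simp [abs_of_pos hc0]
    exact le_rfl
  -- key inclusion
  have hincl : V (l - y) ⊆ S '' V (l - x) := by
    intro φ hφ
    rw [hV] at hφ
    obtain ⟨hφΦ, hφinner⟩ := hφ
    refine ⟨φ₀ + t • (φ - φ₀), ?_, ?_⟩
    · rw [hV]
      constructor
      · have : φ₀ + t • (φ - φ₀) = (1 - t) • φ₀ + t • φ := by
          rw [smul_sub, sub_smul, one_smul]; abel
        rw [this]
        exact hconv hφ₀Φ hφΦ (by linarith) ht0.le (by ring)
      · rw [inner_add_left, real_inner_smul_left, inner_sub_left, hφ₀l, hφinner]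
        have hty : t * y = x := by rw [ht]; field_simp
        nlinarith [hty]
    · simp only [hSdef]
      rw [add_sub_cancel_left, smul_smul, hct, one_smul]
      abel
  -- measure estimate
  have hd1 : (0:ℝ) ≤ (d:ℝ) - 1 := by
    have : (1:ℝ) ≤ (d:ℝ) := by exact_mod_cast hd
    linarith
  set K : NNReal := ⟨c, hc0.le⟩ with hKdef
  have hmeas : μH[(d : ℝ) - 1] (V (l - y))
      ≤ (K : ENNReal) ^ ((d:ℝ) - 1) * μH[(d : ℝ) - 1] (V (l - x)) :=
    le_trans (measure_mono hincl) (hS.hausdorffMeasure_image_le hd1 _)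
  have hcast : ((d - 1 : ℕ) : ℝ) = (d:ℝ) - 1 := by
    push_cast [hd]; ring
  have hK : (K : ENNReal) ^ ((d:ℝ) - 1)
      = ENNReal.ofReal (c ^ (d - 1)) := by
    rw [← hcast, ENNReal.rpow_natCast, ENNReal.ofReal_pow hc0.le]
    congr 1
    exact ENNReal.ofReal_coe_nnreal.symm
  calc ENNReal.ofReal (t ^ (d - 1)) * μH[(d : ℝ) - 1] (V (l - y))
      ≤ ENNReal.ofReal (t ^ (d - 1)) *
        (ENNReal.ofReal (c ^ (d - 1)) * μH[(d : ℝ) - 1] (V (l - x))) := by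
        rw [← hK]; exact mul_le_mul_of_nonneg_left hmeas zero_le
    _ = (ENNReal.ofReal (t ^ (d - 1)) * ENNReal.ofReal (c ^ (d - 1))) *
        μH[(d : ℝ) - 1] (V (l - x)) := by rw [mul_assoc]
    _ = μH[(d : ℝ) - 1] (V (l - x)) := by
        rw [← ENNReal.ofReal_mul (by positivity), ← mul_pow]
        rw [mul_comm t c, hct, one_pow, ENNReal.ofReal_one, one_mul]
end

section
/- Let d ≥ 1 be an integer and l > 0. Let f : [0, l] → ℝ be a continuous nonnegative function with ∫₀^l f(x) dx = 1, and suppose that for all real x, y with 0 < x ≤ y ≤ l one has f(l − y) · x^{d−1} ≤ f(l − x) · y^{d−1}. Then the mean z = ∫₀^l x·f(x) dx satisfies z ≥ l/(d+1). -/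
open MeasureTheory intervalIntegral Set

/-- One-dimensional density lemma: if `f ≥ 0` is continuous on `[0, l]`, integrates to `1`,
and satisfies `f(l-y)·x^{d-1} ≤ f(l-x)·y^{d-1}` for `0 < x ≤ y ≤ l`, then its mean
`∫₀^l x f(x) dx` is at least `l/(d+1)`. -/
theorem mean_lower_bound (d : ℕ) (hd : 1 ≤ d) (l : ℝ) (hl : 0 < l) (f : ℝ → ℝ)
    (hcont : ContinuousOn f (Set.Icc 0 l)) (hnonneg : ∀ x ∈ Set.Icc 0 l, 0 ≤ f x)
    (hint : ∫ x in (0:ℝ)..l, f x = 1)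
    (hshape : ∀ x y : ℝ, 0 < x → x ≤ y → y ≤ l →
      f (l - y) * x ^ (d - 1) ≤ f (l - x) * y ^ (d - 1)) :
    l / (d + 1) ≤ ∫ x in (0:ℝ)..l, x * f x := by
  have hmaps : ∀ y : Set.Icc (0:ℝ) l, l - (y:ℝ) ∈ Set.Icc (0:ℝ) l := by
    intro y
    obtain ⟨h1, h2⟩ := y.2
    constructor <;> simp <;> linarith
  have hginner : Continuous (fun y : Set.Icc (0:ℝ) l => f (l - (y:ℝ))) := by
    apply hcont.comp_continuous
    · exact continuous_const.sub continuous_subtype_val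
    · exact hmaps
  set g : ℝ → ℝ := Set.IccExtend hl.le (fun y : Set.Icc (0:ℝ) l => f (l - (y:ℝ))) with hgdef
  have hg : Continuous g := hginner.Icc_extend'
  have hg_eq : ∀ y ∈ Set.Icc (0:ℝ) l, g y = f (l - y) := fun y hy =>
    Set.IccExtend_of_mem _ _ hy
  have hg_nonneg : ∀ y ∈ Set.Icc (0:ℝ) l, 0 ≤ g y := by
    intro y hy
    rw [hg_eq y hy]
    exact hnonneg _ (hmaps ⟨y, hy⟩)
  have hg_int : ∫ y in (0:ℝ)..l, g y = 1 := by
    rw [intervalIntegral.integral_congr (g := fun y => f (l - y))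
      (fun y hy => hg_eq y (by rwa [Set.uIcc_of_le hl.le] at hy))]
    rw [intervalIntegral.integral_comp_sub_left f l]
    simpa using hint
  set G : ℝ → ℝ := fun t => ∫ x in (0:ℝ)..t, g x with hGdef
  have hGderiv : ∀ t : ℝ, HasDerivAt G (g t) t := fun t =>
    intervalIntegral.integral_hasDerivAt_right (hg.intervalIntegrable _ _)
      hg.aestronglyMeasurable.stronglyMeasurableAtFilter hg.continuousAt
  have hGcont : Continuous G := by
    apply continuous_iff_continuousAt.2
    exact fun t => (hGderiv t).continuousAt
  have hGl : G l = 1 := hg_int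
  -- key pointwise inequality : y * g y ≤ d * G y on [0, l]
  have hkey : ∀ y ∈ Set.Icc (0:ℝ) l, y * g y ≤ d * G y := by
    intro y hy
    rcases eq_or_lt_of_le hy.1 with h0 | h0
    · simp [← h0, hGdef]
    · -- integrate shape in x over (0, y]
      have hmono : (∫ x in (0:ℝ)..y, g y * x ^ (d - 1)) ≤
          ∫ x in (0:ℝ)..y, g x * y ^ (d - 1) := by
        apply intervalIntegral.integral_mono_ae_restrict h0.le
        · exact ((continuous_const.mul (continuous_pow _)).intervalIntegrable _ _)
        · exact ((hg.mul continuous_const).intervalIntegrable _ _)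
        · have h00 : (volume.restrict (Set.Icc (0:ℝ) y)) {0} = 0 := by
            rw [Measure.restrict_apply (measurableSet_singleton 0)]
            exact measure_mono_null (Set.inter_subset_left) (measure_singleton 0)
          have hIcc : (volume.restrict (Set.Icc (0:ℝ) y)) (Set.Icc 0 y)ᶜ = 0 := by
            rw [Measure.restrict_apply (measurableSet_Icc.compl)]
            simp
          filter_upwards [measure_eq_zero_iff_ae_notMem.1 h00,
            measure_eq_zero_iff_ae_notMem.1 hIcc] with x hx0 hxI
          have hxmem : x ∈ Set.Icc (0:ℝ) y := by
            by_contra h; exact hxI h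
          have hxpos : 0 < x := lt_of_le_of_ne hxmem.1 (fun h => hx0 h.symm)
          have := hshape x y hxpos hxmem.2 hy.2
          rwa [← hg_eq y hy, ← hg_eq x ⟨hxmem.1, le_trans hxmem.2 hy.2⟩] at this
      rw [intervalIntegral.integral_const_mul, intervalIntegral.integral_mul_const,
        integral_pow] at hmono
      have hdd : d - 1 + 1 = d := Nat.sub_add_cancel hd
      have hdd' : ((d - 1 : ℕ) : ℝ) + 1 = (d : ℝ) := by exact_mod_cast hdd
      have hyp : (0:ℝ) < y ^ (d - 1) := pow_pos h0 _
      have hdpos : (0:ℝ) < d := by exact_mod_cast hd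
      have hyd : (y:ℝ) ^ (d - 1 + 1) = y ^ (d - 1) * y := pow_succ y (d - 1)
      rw [zero_pow (by omega), sub_zero, hyd, hdd'] at hmono
      have hGy : (∫ x in (0:ℝ)..y, g x) = G y := rfl
      rw [hGy] at hmono
      -- hmono : g y * (y^(d-1) * y / d) ≤ G y * y^(d-1)
      have hm2 : g y * (y ^ (d - 1) * y) ≤ (d:ℝ) * (G y * y ^ (d - 1)) := by
        have h := mul_le_mul_of_nonneg_left hmono hdpos.le
        calc g y * (y ^ (d - 1) * y) = (d:ℝ) * (g y * (y ^ (d - 1) * y / (d:ℝ))) := by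
              field_simp
          _ ≤ _ := h
      have h3 : (y * g y) * y ^ (d - 1) ≤ ((d:ℝ) * G y) * y ^ (d - 1) := by nlinarith [hm2]
      exact le_of_mul_le_mul_right h3 hyp
  -- integrate the key inequality
  have hyg_cont : Continuous (fun y : ℝ => y * g y) := continuous_id.mul hg
  have hI1 : (∫ y in (0:ℝ)..l, y * g y) ≤ ∫ y in (0:ℝ)..l, (d:ℝ) * G y := by
    apply intervalIntegral.integral_mono_on hl.le
    · exact (hyg_cont.intervalIntegrable _ _)
    · exact ((continuous_const.mul hGcont).intervalIntegrable _ _)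
    · exact hkey
  -- integration by parts: ∫ G + ∫ y g y = l * G l
  have hparts : (∫ y in (0:ℝ)..l, (G y + y * g y)) = l * G l - 0 * G 0 := by
    apply intervalIntegral.integral_eq_sub_of_hasDerivAt
    · intro y _
      have h := (hasDerivAt_id' (x := y)).mul (hGderiv y)
      simp only [one_mul] at h
      exact h
    · exact ((hGcont.add hyg_cont).intervalIntegrable _ _)
  rw [intervalIntegral.integral_add ((hGcont).intervalIntegrable _ _)
    (hyg_cont.intervalIntegrable _ _), hGl] at hparts
  have hGint0 : G 0 = 0 := intervalIntegral.integral_same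
  rw [hGint0] at hparts
  set I : ℝ := ∫ y in (0:ℝ)..l, y * g y with hIdef
  have hGsum : (∫ y in (0:ℝ)..l, G y) = l - I := by
    have h : (∫ y in (0:ℝ)..l, G y) + I = l * 1 - 0 * 0 := hparts
    linarith [h]
  have hImul : (∫ y in (0:ℝ)..l, (d:ℝ) * G y) = (d:ℝ) * (l - I) := by
    rw [intervalIntegral.integral_const_mul, hGsum]
  have hIle : I ≤ (d:ℝ) * l / ((d:ℝ) + 1) := by
    have hdpos : (0:ℝ) < (d:ℝ) + 1 := by positivity
    rw [hImul] at hI1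
    rw [le_div_iff₀ hdpos]
    nlinarith [hI1]
  -- relate I to the original mean
  have hfi : IntervalIntegrable f volume 0 l := by
    apply ContinuousOn.intervalIntegrable
    rwa [Set.uIcc_of_le hl.le]
  have hxfi : IntervalIntegrable (fun x => x * f x) volume 0 l := by
    apply ContinuousOn.intervalIntegrable
    rw [Set.uIcc_of_le hl.le]
    exact continuousOn_id.mul hcont
  have hmean : (∫ x in (0:ℝ)..l, x * f x) = l - I := by
    have h1 : I = ∫ y in (0:ℝ)..l, (fun x => (l - x) * f x) (l - y) := by
      rw [hIdef]
      apply intervalIntegral.integral_congr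
      intro y hy
      rw [Set.uIcc_of_le hl.le] at hy
      simp only
      rw [hg_eq y hy, sub_sub_cancel]
    rw [intervalIntegral.integral_comp_sub_left (fun x => (l - x) * f x) l] at h1
    simp only [sub_self, sub_zero] at h1
    have h2 : (∫ x in (0:ℝ)..l, (l - x) * f x)
        = l * (∫ x in (0:ℝ)..l, f x) - ∫ x in (0:ℝ)..l, x * f x := by
      rw [← intervalIntegral.integral_const_mul, ← intervalIntegral.integral_sub]
      · apply intervalIntegral.integral_congr
        intro x _; ring
      · exact hfi.const_mul l
      · exact hxfi
    rw [h1, h2, hint]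
    ring
  rw [hmean]
  have hsplit : l / ((d:ℝ) + 1) + (d:ℝ) * l / ((d:ℝ) + 1) = l := by
    have : ((d:ℝ) + 1) ≠ 0 := by positivity
    field_simp
    ring
  linarith [hIle]
end

section
/- Let l ≥ 1 be a positive integer, and let φ_1, …, φ_n and ψ_1, …, ψ_m (with m ≥ 1) be vectors in ℝ^l satisfying ⟨φ_i, ψ_j⟩ ≥ 0 for all 1 ≤ i ≤ n and 1 ≤ j ≤ m. Then Σ_{i=1}^{n} max_{1≤j≤m} ⟨φ_i, ψ_j⟩ ≤ 2·l · max_{1≤j≤m} Σ_{i=1}^{n} ⟨φ_i, ψ_j⟩. -/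
open scoped RealInnerProductSpace

open Matrix Polynomial

lemma exists_eigvec_of_root {d : ℕ} (A : Matrix (Fin d) (Fin d) ℂ) (t : ℂ)
    (ht : t ∈ A.charpoly.roots) :
    ∃ v : Fin d → ℂ, v ≠ 0 ∧ A.mulVec v = t • v := by
  have hroot : A.charpoly.IsRoot t := (Polynomial.mem_roots'.mp ht).2
  have hdet : (t • (1 : Matrix (Fin d) (Fin d) ℂ) - A).det = 0 := by
    have h1 : A.charpoly.eval t = ((charmatrix A).map (Polynomial.evalRingHom t)).det := by
      rw [Matrix.charpoly]
      exact (Polynomial.evalRingHom t).map_det _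
    have h2 : (charmatrix A).map (Polynomial.evalRingHom t)
        = t • (1 : Matrix (Fin d) (Fin d) ℂ) - A := by
      ext i j
      by_cases h : i = j <;>
        simp [charmatrix_apply, Matrix.map_apply, Matrix.one_apply, Matrix.diagonal_apply, h]
    rw [← h2, ← h1]
    exact hroot
  obtain ⟨v, hv0, hv⟩ := Matrix.exists_mulVec_eq_zero_iff.mpr hdet
  refine ⟨v, hv0, ?_⟩
  rw [Matrix.sub_mulVec, Matrix.smul_mulVec, Matrix.one_mulVec, sub_eq_zero] at hv
  exact hv.symm

noncomputable abbrev cabs : AbsoluteValue ℂ ℝ := NormedField.toAbsoluteValue ℂ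

lemma cabs_ofReal (x : ℝ) : cabs (x : ℂ) = |x| := Complex.norm_real x

/-- Key lemma: a nonnegative `m × m` matrix of the form `F * Gᵀ` with `F, G` of width `l`
has trace at most `l` times the maximum column sum. -/
lemma trace_le_card_mul_colsum {l m : ℕ} (F G : Matrix (Fin m) (Fin l) ℝ) (R : ℝ)
    (hR : 0 ≤ R) (hN : ∀ j j', 0 ≤ (F * Gᵀ) j j')
    (hcol : ∀ j', (∑ j, (F * Gᵀ) j j') ≤ R) :
    Matrix.trace (F * Gᵀ) ≤ l * R := by
  classical
  set ρ : ℝ →+* ℂ := Complex.ofRealHom with hρ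
  set A : Matrix (Fin l) (Fin l) ℂ := (Gᵀ * F).map ρ with hA
  -- trace identities
  have htr : Matrix.trace (F * Gᵀ) = Matrix.trace (Gᵀ * F) := Matrix.trace_mul_comm F Gᵀ
  have htrA : A.trace = ((Matrix.trace (Gᵀ * F) : ℝ) : ℂ) := by
    rw [hA, Matrix.trace, Matrix.trace, Complex.ofReal_sum]
    exact Finset.sum_congr rfl fun x _ => rfl
  -- roots
  have hsum : A.trace = A.charpoly.roots.sum := Matrix.trace_eq_sum_roots_charpoly A
  have hcard : A.charpoly.roots.card = l := by
    have h1 := Matrix.charpoly_natDegree_eq_dim A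
    have h2 := (Polynomial.splits_iff_card_roots (f := A.charpoly)).mp
      (IsAlgClosed.splits A.charpoly)
    rw [h2, h1, Fintype.card_fin]
  -- every root has modulus at most R
  have hroot : ∀ t ∈ A.charpoly.roots, cabs t ≤ R := by
    intro t ht
    obtain ⟨v, hv0, hv⟩ := exists_eigvec_of_root A t ht
    rcases eq_or_ne t 0 with h0 | h0
    · simpa [h0] using hR
    -- c = F' *ᵥ v  is a nonzero eigenvector of N' = F' * G'ᵀ
    set F' : Matrix (Fin m) (Fin l) ℂ := F.map ρ with hF'
    set G' : Matrix (Fin m) (Fin l) ℂ := G.map ρ with hG'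
    have hAmul : A = G'ᵀ * F' := by
      rw [hA, hF', hG', ← Matrix.transpose_map, ← Matrix.map_mul]
    set c : Fin m → ℂ := F'.mulVec v with hc
    have hNc : (F' * G'ᵀ).mulVec c = t • c := by
      rw [hc, ← Matrix.mulVec_mulVec, Matrix.mulVec_mulVec (v := v), ← hAmul, hv,
        Matrix.mulVec_smul]
    have hc0 : c ≠ 0 := by
      intro h
      apply hv0
      have : A.mulVec v = 0 := by
        rw [hAmul, ← Matrix.mulVec_mulVec, ← hc, h, Matrix.mulVec_zero]
      rw [hv] at this
      exact (smul_eq_zero.mp this).resolve_left h0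
    -- ℓ¹ argument
    set S : ℝ := ∑ j, cabs (c j) with hS
    have hSpos : 0 < S := by
      obtain ⟨j, hj⟩ := Function.ne_iff.mp hc0
      refine Finset.sum_pos' (fun j' _ => AbsoluteValue.nonneg _ _) ⟨j, Finset.mem_univ j, ?_⟩
      simpa using hj
    have hNmap : ∀ a b : Fin m, ((F' * G'ᵀ) a b) = (((F * Gᵀ) a b : ℝ) : ℂ) := by
      intro a b
      simp only [hF', hG', Matrix.mul_apply, Matrix.transpose_apply, Matrix.map_apply,
        Complex.ofReal_sum]
      exact Finset.sum_congr rfl fun x _ => (Complex.ofReal_mul _ _).symm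
    have key : cabs t * S ≤ R * S := by
      have h1 : cabs t * S = ∑ j, cabs ((t • c) j) := by
        rw [Finset.mul_sum]
        exact Finset.sum_congr rfl fun j _ => by simp [map_mul cabs]
      have h2 : ∀ j, cabs (((F' * G'ᵀ).mulVec c) j)
          ≤ ∑ j', (F * Gᵀ) j j' * cabs (c j') := by
        intro j
        calc cabs (∑ j', (F' * G'ᵀ) j j' * c j')
            ≤ ∑ j', cabs ((F' * G'ᵀ) j j' * c j') :=
              AbsoluteValue.sum_le _ _ _
          _ = ∑ j', (F * Gᵀ) j j' * cabs (c j') := by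
              refine Finset.sum_congr rfl fun j' _ => ?_
              rw [map_mul cabs, hNmap, cabs_ofReal, abs_of_nonneg (hN j j')]
      have h3 : cabs t * S ≤ ∑ j, ∑ j', (F * Gᵀ) j j' * cabs (c j') := by
        rw [h1, ← hNc]
        exact Finset.sum_le_sum fun j _ => h2 j
      calc cabs t * S ≤ ∑ j, ∑ j', (F * Gᵀ) j j' * cabs (c j') := h3
        _ = ∑ j', (∑ j, (F * Gᵀ) j j') * cabs (c j') := by
            rw [Finset.sum_comm]
            exact Finset.sum_congr rfl fun j' _ => (Finset.sum_mul _ _ _).symm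
        _ ≤ ∑ j', R * cabs (c j') :=
            Finset.sum_le_sum fun j' _ =>
              mul_le_mul_of_nonneg_right (hcol j') (AbsoluteValue.nonneg _ _)
        _ = R * S := by rw [hS, Finset.mul_sum]
    exact le_of_mul_le_mul_right key hSpos
  -- put it together
  have habs : cabs A.trace ≤ l * R := by
    rw [hsum]
    calc cabs A.charpoly.roots.sum
        ≤ (A.charpoly.roots.map cabs).sum :=
          Multiset.le_sum_of_subadditive cabs (map_zero _).le
            (fun a b => AbsoluteValue.add_le _ a b) _
      _ ≤ (A.charpoly.roots.map cabs).card • R := by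
          refine Multiset.sum_le_card_nsmul _ _ ?_
          intro x hx
          obtain ⟨t, ht, rfl⟩ := Multiset.mem_map.mp hx
          exact hroot t ht
      _ = l * R := by rw [Multiset.card_map, hcard, nsmul_eq_mul]
  have : Matrix.trace (Gᵀ * F) ≤ cabs A.trace := by
    rw [htrA, cabs_ofReal]
    exact le_abs_self _
  rw [htr]
  exact this.trans habs

/-- Lemma A.5: for vectors `φ_1,…,φ_n` and `ψ_1,…,ψ_m` in `ℝ^l` with all pairwise inner
products nonnegative, `Σ_i max_j ⟨φ_i, ψ_j⟩ ≤ 2l · max_j Σ_i ⟨φ_i, ψ_j⟩`. -/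
theorem sum_max_le_two_dim_max_sum (l n m : ℕ) (hl : 1 ≤ l) (hm : 1 ≤ m)
    (φ : Fin n → EuclideanSpace ℝ (Fin l)) (ψ : Fin m → EuclideanSpace ℝ (Fin l))
    (hpos : ∀ i j, 0 ≤ ⟪φ i, ψ j⟫) :
    ∑ i, (Finset.univ.sup' (Finset.univ_nonempty_iff.mpr ⟨⟨0, hm⟩⟩)
        fun j => ⟪φ i, ψ j⟫)
      ≤ 2 * l * Finset.univ.sup' (Finset.univ_nonempty_iff.mpr ⟨⟨0, hm⟩⟩)
        (fun j => ∑ i, ⟪φ i, ψ j⟫) := by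
  classical
  have ne : (Finset.univ : Finset (Fin m)).Nonempty := Finset.univ_nonempty_iff.mpr ⟨⟨0, hm⟩⟩
  have hip : ∀ (x y : EuclideanSpace ℝ (Fin l)), ⟪x, y⟫ = ∑ k, x k * y k := by
    intro x y
    simp [PiLp.inner_apply, RCLike.inner_apply, conj_trivial, mul_comm]
  obtain ⟨ji, hji⟩ : ∃ ji : Fin n → Fin m, ∀ i,
      (Finset.univ.sup' ne fun j => ⟪φ i, ψ j⟫) = ⟪φ i, ψ (ji i)⟫ := by
    choose ji _ hji using fun i : Fin n =>
      Finset.exists_mem_eq_sup' ne (fun j => ⟪φ i, ψ j⟫)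
    exact ⟨ji, hji⟩
  set R : ℝ := Finset.univ.sup' ne (fun j => ∑ i, ⟪φ i, ψ j⟫) with hRdef
  have hcolR : ∀ j, (∑ i, ⟪φ i, ψ j⟫) ≤ R := fun j =>
    Finset.le_sup' (fun j => ∑ i, ⟪φ i, ψ j⟫) (Finset.mem_univ j)
  have hR : 0 ≤ R :=
    le_trans (Finset.sum_nonneg fun i _ => hpos i ⟨0, hm⟩) (hcolR ⟨0, hm⟩)
  set F : Matrix (Fin m) (Fin l) ℝ :=
    fun j k => ∑ i ∈ Finset.univ.filter (fun i => ji i = j), φ i k with hF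
  set G : Matrix (Fin m) (Fin l) ℝ := fun j k => ψ j k with hG
  have hFG : ∀ j j', (F * Gᵀ) j j'
      = ∑ i ∈ Finset.univ.filter (fun i => ji i = j), ⟪φ i, ψ j'⟫ := by
    intro j j'
    rw [Matrix.mul_apply]
    simp_rw [Matrix.transpose_apply, hF, hG, Finset.sum_mul, hip]
    exact Finset.sum_comm
  have hN : ∀ j j', 0 ≤ (F * Gᵀ) j j' := by
    intro j j'
    rw [hFG]
    exact Finset.sum_nonneg fun i _ => hpos i j'
  have hcol : ∀ j', (∑ j, (F * Gᵀ) j j') ≤ R := by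
    intro j'
    have : (∑ j, (F * Gᵀ) j j') = ∑ i, ⟪φ i, ψ j'⟫ := by
      simp_rw [hFG]
      exact Finset.sum_fiberwise_of_maps_to (fun i _ => Finset.mem_univ (ji i)) _
    rw [this]
    exact hcolR j'
  have htrace : Matrix.trace (F * Gᵀ) = ∑ i, ⟪φ i, ψ (ji i)⟫ := by
    rw [Matrix.trace]
    have : ∀ j, (F * Gᵀ) j j
        = ∑ i ∈ Finset.univ.filter (fun i => ji i = j), ⟪φ i, ψ (ji i)⟫ := by
      intro j
      rw [hFG]
      exact Finset.sum_congr rfl fun i hi => by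
        rw [(Finset.mem_filter.mp hi).2]
    simp_rw [Matrix.diag, this]
    exact Finset.sum_fiberwise_of_maps_to (fun i _ => Finset.mem_univ (ji i)) _
  have hmain : (∑ i, ⟪φ i, ψ (ji i)⟫) ≤ l * R := by
    rw [← htrace]
    exact trace_le_card_mul_colsum F G R hR hN hcol
  have hfin : (l : ℝ) * R ≤ 2 * l * R := by
    nlinarith [hR, Nat.cast_nonneg (α := ℝ) l]
  calc (∑ i, Finset.univ.sup' ne fun j => ⟪φ i, ψ j⟫)
      = ∑ i, ⟪φ i, ψ (ji i)⟫ := Finset.sum_congr rfl fun i _ => hji i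
    _ ≤ l * R := hmain
    _ ≤ 2 * l * R := hfin
end

section
/- Let d ≥ 1, let φ_1, …, φ_n be vectors in ℝ^d, and let (θ_1, η_1), …, (θ_m, η_m) (with m ≥ 1) be pairs of vectors in ℝ^d such that ⟨φ_i, η_j⟩ − ⟨φ_i, θ_j⟩² ≥ 0 for all 1 ≤ i ≤ n and 1 ≤ j ≤ m. Then Σ_{i=1}^{n} max_{1≤j≤m} ( ⟨φ_i, η_j⟩ − ⟨φ_i, θ_j⟩² ) ≤ 2·(d+1)² · max_{1≤j≤m} Σ_{i=1}^{n} ( ⟨φ_i, η_j⟩ − ⟨φ_i, θ_j⟩² ). -/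
open Module Submodule Matrix

lemma exists_spanner {V : Type*} [AddCommGroup V] [Module ℝ V] [FiniteDimensional ℝ V]
    {m : ℕ} (hm : 0 < m) (v : Fin m → V) :
    ∃ (r : ℕ) (c : Fin r → Fin m), r ≤ finrank ℝ V ∧
      ∀ j, ∃ lam : Fin r → ℝ, (∀ k, |lam k| ≤ 1) ∧ v j = ∑ k, lam k • v (c k) := by
  classical
  set W : Submodule ℝ V := span ℝ (Set.range v) with hW
  set w : Fin m → W := fun j => ⟨v j, subset_span (Set.mem_range_self j)⟩ with hw
  have hspanw : span ℝ (Set.range w) = (⊤ : Submodule ℝ W) := by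
    apply Submodule.map_injective_of_injective W.injective_subtype
    rw [Submodule.map_span, Submodule.map_top, Submodule.range_subtype]
    have himg : W.subtype '' Set.range w = Set.range v := by
      ext x
      constructor
      · rintro ⟨-, ⟨j, rfl⟩, rfl⟩; exact ⟨j, rfl⟩
      · rintro ⟨j, rfl⟩; exact ⟨w j, ⟨j, rfl⟩, rfl⟩
    rw [himg]
  set r : ℕ := finrank ℝ W with hr
  refine ⟨r, ?_⟩
  let b : Basis (Fin r) ℝ W := Module.finBasis ℝ W
  -- find c0 with unit determinant
  obtain ⟨s, hs_sub, hs_span, hs_li⟩ := exists_linearIndependent ℝ (Set.range w)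
  have hs_fin : s.Finite := (Set.finite_range w).subset hs_sub
  haveI := hs_fin.fintype
  have hsp' : (⊤ : Submodule ℝ W) ≤ span ℝ (Set.range ((↑) : s → W)) := by
    rw [Subtype.range_val, hs_span, hspanw]
  let B : Basis s ℝ W := Basis.mk hs_li hsp'
  have hcard : Fintype.card s = r := (finrank_eq_card_basis B).symm
  let e : Fin r ≃ s := (Fintype.equivFinOfCardEq hcard).symm
  have hc0 : ∀ k : Fin r, ∃ j : Fin m, w j = (e k : W) := fun k => hs_sub (e k).2
  choose c0 hc0spec using hc0
  have hunit : IsUnit (b.det (w ∘ c0)) := by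
    have heq : w ∘ c0 = ⇑(B.reindex e.symm) := by
      funext k
      simp [Function.comp, hc0spec k, B, Basis.mk_apply]
    rw [heq]
    exact b.isUnit_det _
  -- maximize |det|
  haveI : Nonempty (Fin m) := ⟨⟨0, hm⟩⟩
  obtain ⟨copt, hcopt⟩ := Finite.exists_max (fun c : Fin r → Fin m => |b.det (w ∘ c)|)
  have hdetpos : 0 < |b.det (w ∘ copt)| :=
    lt_of_lt_of_le (abs_pos.mpr hunit.ne_zero) (hcopt c0)
  set A : Matrix (Fin r) (Fin r) ℝ := b.toMatrix (w ∘ copt) with hA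
  have hAdet : A.det = b.det (w ∘ copt) := (b.det_apply _).symm
  have hAdetne : A.det ≠ 0 := by rw [hAdet]; intro h; rw [h] at hdetpos; simp at hdetpos
  refine ⟨copt, Submodule.finrank_le W, fun j => ?_⟩
  set col : Fin r → ℝ := fun a => b.repr (w j) a with hcol
  set lam : Fin r → ℝ := fun k => (A.det)⁻¹ * Matrix.cramer A col k with hlam
  have hupdate : ∀ k, A.updateCol k col = b.toMatrix (w ∘ Function.update copt k j) := by
    intro k
    ext a k'
    by_cases h : k' = k
    · subst h; simp [Matrix.updateCol_apply, Basis.toMatrix_apply, col]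
    · simp [hA, Matrix.updateCol_apply, h, Basis.toMatrix_apply, Function.update_of_ne h]
  have hlam_le : ∀ k, |lam k| ≤ 1 := by
    intro k
    have h1 : |Matrix.cramer A col k| ≤ |A.det| := by
      rw [Matrix.cramer_apply, hupdate k, hAdet]
      have h2 := hcopt (Function.update copt k j)
      simpa [Basis.det_apply] using h2
    have h3 : |lam k| = |A.det|⁻¹ * |Matrix.cramer A col k| := by
      rw [hlam]; rw [abs_mul, abs_inv]
    rw [h3]
    have h4 : |A.det|⁻¹ * |Matrix.cramer A col k| ≤ |A.det|⁻¹ * |A.det| :=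
      mul_le_mul_of_nonneg_left h1 (by positivity)
    have h5 : |A.det|⁻¹ * |A.det| = 1 := inv_mul_cancel₀ (by simpa using hAdetne)
    linarith
  have hmv : A *ᵥ lam = col := by
    have hl : lam = (A.det)⁻¹ • Matrix.cramer A col := by
      funext k; simp [hlam, Pi.smul_apply, smul_eq_mul]
    rw [hl, Matrix.mulVec_smul, Matrix.mulVec_cramer, smul_smul, inv_mul_cancel₀ hAdetne,
      one_smul]
  have hrepW : w j = ∑ k, lam k • w (copt k) := by
    apply b.repr.injective
    ext a
    rw [map_sum]
    simp only [_root_.map_smul]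
    have h6 : (b.repr (w j)) a = col a := rfl
    rw [h6, ← hmv]
    simp [Matrix.mulVec, dotProduct, Basis.toMatrix_apply, A, mul_comm]
  refine ⟨lam, hlam_le, ?_⟩
  have hfin := congrArg (Subtype.val : W → V) hrepW
  simpa using hfin

open scoped RealInnerProductSpace

lemma embed_inner (d : ℕ) (φ η θ : EuclideanSpace ℝ (Fin d))
    (x y : EuclideanSpace ℝ (Fin d ⊕ Fin d × Fin d))
    (hx1 : ∀ a, x (Sum.inl a) = φ a) (hx2 : ∀ p, x (Sum.inr p) = -(φ p.1 * φ p.2))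
    (hy1 : ∀ a, y (Sum.inl a) = η a) (hy2 : ∀ p, y (Sum.inr p) = θ p.1 * θ p.2) :
    ⟪x, y⟫ = ⟪φ, η⟫ - ⟪φ, θ⟫ ^ 2 := by
  simp only [PiLp.inner_apply, RCLike.inner_apply, conj_trivial]
  rw [Fintype.sum_sum_type]
  have h1 : ∑ p : Fin d × Fin d, y (Sum.inr p) * x (Sum.inr p)
      = -(∑ a, θ a * φ a) ^ 2 := by
    simp only [hx2, hy2]
    rw [Fintype.sum_prod_type, sq, Finset.sum_mul_sum]
    have h2 : ∀ a b : Fin d, (θ a * θ b) * -(φ a * φ b) = -(θ a * φ a * (θ b * φ b)) := by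
      intros; ring
    simp only [h2, Finset.sum_neg_distrib]
  rw [h1]
  simp only [hx1, hy1]
  ring

/-- Variance version of Lemma A.5: if `⟨φ_i, η_j⟩ - ⟨φ_i, θ_j⟩² ≥ 0` for all `i, j`, then
`Σ_i max_j (⟨φ_i, η_j⟩ - ⟨φ_i, θ_j⟩²) ≤ 2(d+1)² · max_j Σ_i (⟨φ_i, η_j⟩ - ⟨φ_i, θ_j⟩²)`. -/
theorem sum_max_variance_le (d n m : ℕ) (hd : 1 ≤ d) (hm : 1 ≤ m)
    (φ : Fin n → EuclideanSpace ℝ (Fin d))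
    (θ η : Fin m → EuclideanSpace ℝ (Fin d))
    (hpos : ∀ i j, 0 ≤ ⟪φ i, η j⟫ - ⟪φ i, θ j⟫ ^ 2) :
    ∑ i, (Finset.univ.sup' (Finset.univ_nonempty_iff.mpr ⟨⟨0, hm⟩⟩)
        fun j => ⟪φ i, η j⟫ - ⟪φ i, θ j⟫ ^ 2)
      ≤ 2 * (d + 1) ^ 2 * Finset.univ.sup' (Finset.univ_nonempty_iff.mpr ⟨⟨0, hm⟩⟩)
        (fun j => ∑ i, (⟪φ i, η j⟫ - ⟪φ i, θ j⟫ ^ 2)) := by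
  classical
  have hne := Finset.univ_nonempty_iff.mpr (⟨⟨0, hm⟩⟩ : Nonempty (Fin m))
  let x : Fin n → EuclideanSpace ℝ (Fin d ⊕ Fin d × Fin d) :=
    fun i => WithLp.toLp 2 fun s => Sum.elim (fun a => φ i a) (fun p => -(φ i p.1 * φ i p.2)) s
  let y : Fin m → EuclideanSpace ℝ (Fin d ⊕ Fin d × Fin d) :=
    fun j => WithLp.toLp 2 fun s => Sum.elim (fun a => η j a) (fun p => θ j p.1 * θ j p.2) s
  have key : ∀ i j, ⟪x i, y j⟫ = ⟪φ i, η j⟫ - ⟪φ i, θ j⟫ ^ 2 := fun i j =>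
    embed_inner d (φ i) (η j) (θ j) (x i) (y j)
      (fun a => rfl) (fun p => rfl) (fun a => rfl) (fun p => rfl)
  obtain ⟨r, c, hr, hc⟩ := exists_spanner hm y
  have hrank : Module.finrank ℝ (EuclideanSpace ℝ (Fin d ⊕ Fin d × Fin d)) = d + d * d := by
    rw [finrank_euclideanSpace]
    simp
  have hr' : r ≤ d + d * d := by rw [← hrank]; exact hr
  set S : ℝ := Finset.univ.sup' hne (fun j => ∑ i, (⟪φ i, η j⟫ - ⟪φ i, θ j⟫ ^ 2)) with hS
  have hSnonneg : 0 ≤ S := by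
    refine le_trans ?_ (Finset.le_sup' _ (Finset.mem_univ (⟨0, hm⟩ : Fin m)))
    exact Finset.sum_nonneg fun i _ => hpos i _
  have stepA : ∀ i, (Finset.univ.sup' hne fun j => ⟪φ i, η j⟫ - ⟪φ i, θ j⟫ ^ 2)
      ≤ ∑ k, ⟪x i, y (c k)⟫ := by
    intro i
    apply Finset.sup'_le
    intro j _
    obtain ⟨lam, hlam, hrep⟩ := hc j
    have h1 : ⟪φ i, η j⟫ - ⟪φ i, θ j⟫ ^ 2 = ⟪x i, y j⟫ := (key i j).symm
    rw [h1, hrep, inner_sum]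
    simp only [real_inner_smul_right]
    refine Finset.sum_le_sum fun k _ => ?_
    have ht : (0:ℝ) ≤ ⟪x i, y (c k)⟫ := by rw [key]; exact hpos i (c k)
    calc lam k * ⟪x i, y (c k)⟫ ≤ 1 * ⟪x i, y (c k)⟫ :=
          mul_le_mul_of_nonneg_right ((le_abs_self _).trans (hlam k)) ht
      _ = ⟪x i, y (c k)⟫ := one_mul _
  calc ∑ i, (Finset.univ.sup' hne fun j => ⟪φ i, η j⟫ - ⟪φ i, θ j⟫ ^ 2)
      ≤ ∑ i, ∑ k, ⟪x i, y (c k)⟫ := Finset.sum_le_sum fun i _ => stepA i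
    _ = ∑ k, ∑ i, ⟪x i, y (c k)⟫ := Finset.sum_comm
    _ ≤ ∑ _k : Fin r, S := by
        refine Finset.sum_le_sum fun k _ => ?_
        have h2 : ∑ i, ⟪x i, y (c k)⟫ = ∑ i, (⟪φ i, η (c k)⟫ - ⟪φ i, θ (c k)⟫ ^ 2) := by
          exact Finset.sum_congr rfl fun i _ => key i (c k)
        rw [h2, hS]
        exact Finset.le_sup' (fun j => ∑ i, (⟪φ i, η j⟫ - ⟪φ i, θ j⟫ ^ 2))
          (Finset.mem_univ (c k))
    _ = (r : ℝ) * S := by rw [Finset.sum_const, Finset.card_univ, Fintype.card_fin]; simp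
    _ ≤ 2 * (d + 1) ^ 2 * S := by
        refine mul_le_mul_of_nonneg_right ?_ hSnonneg
        have : (r : ℝ) ≤ ((d : ℝ) + (d : ℝ) * (d : ℝ)) := by
          exact_mod_cast hr'
        push_cast
        nlinarith [this]
end

section
/- Let A and B be symmetric positive definite d×d real matrices with A ⪯ B (that is, B − A is positive semidefinite). If B ⪯ 2A fails, i.e., there exists a vector v ∈ ℝ^d with vᵀBv > 2·vᵀAv, then det(B) ≥ 2·det(A). -/
open Matrix

/-- Determinant-doubling step: if `A ⪯ B` are positive definite and `B ⪯ 2A` fails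
(witnessed by a vector `v` with `vᵀBv > 2 vᵀAv`), then `det B ≥ 2 det A`. -/
theorem det_double_of_not_le (d : ℕ) (A B : Matrix (Fin d) (Fin d) ℝ)
    (hA : A.PosDef) (hB : B.PosDef) (hAB : (B - A).PosSemidef)
    (hfail : ∃ v : Fin d → ℝ, 2 * (v ⬝ᵥ A.mulVec v) < v ⬝ᵥ B.mulVec v) :
    2 * A.det ≤ B.det := by
  obtain ⟨v, hv⟩ := hfail
  open scoped MatrixOrder in
  set S := CFC.sqrt A with hSdef
  open scoped MatrixOrder in
  have hSpsd : S.PosSemidef := (CFC.sqrt_nonneg A).posSemidef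
  open scoped MatrixOrder in
  have hSS : S * S = A := CFC.sqrt_mul_sqrt_self A hA.posSemidef.nonneg
  have hdetA : 0 < A.det := hA.det_pos
  have hdetS : S.det ≠ 0 := by
    intro h
    rw [← hSS, det_mul, h, mul_zero] at hdetA
    exact lt_irrefl _ hdetA
  have hSunit : IsUnit S.det := isUnit_iff_ne_zero.mpr hdetS
  have hSt : Sᵀ = S := by simpa using hSpsd.isHermitian.eq
  set T := S⁻¹ with hTdef
  have hTh : T.IsHermitian := hSpsd.isHermitian.inv
  have hTt : Tᵀ = T := by simpa using hTh.eq
  have hST : S * T = 1 := mul_nonsing_inv S hSunit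
  have hTS : T * S = 1 := nonsing_inv_mul S hSunit
  set C := T * B * T with hCdef
  have hC : C.IsHermitian := by
    rw [hCdef]
    nth_rewrite 2 [← hTh.eq]
    exact isHermitian_mul_mul_conjTranspose T hB.isHermitian
  have quad : ∀ x : Fin d → ℝ, x ⬝ᵥ C *ᵥ x = (T *ᵥ x) ⬝ᵥ B *ᵥ (T *ᵥ x) := by
    intro x
    rw [hCdef, ← mulVec_mulVec, ← mulVec_mulVec, Matrix.dotProduct_mulVec, ← mulVec_transpose,
      hTt]
  have quadA : ∀ w : Fin d → ℝ, w ⬝ᵥ A *ᵥ w = (S *ᵥ w) ⬝ᵥ (S *ᵥ w) := by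
    intro w
    rw [← hSS, ← mulVec_mulVec, Matrix.dotProduct_mulVec, ← mulVec_transpose, hSt]
  -- All quadratic values of C dominate the identity.
  have key1 : ∀ x : Fin d → ℝ, x ⬝ᵥ x ≤ x ⬝ᵥ C *ᵥ x := by
    intro x
    have h1 := hAB.dotProduct_mulVec_nonneg (T *ᵥ x)
    simp only [star_trivial, sub_mulVec, dotProduct_sub, sub_nonneg] at h1
    have h2 : x ⬝ᵥ x = (T *ᵥ x) ⬝ᵥ A *ᵥ (T *ᵥ x) := by
      rw [quadA, mulVec_mulVec, hST, one_mulVec]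
    rw [h2, quad]
    exact h1
  -- The witness vector for exceeding `2`.
  set x₀ := S *ᵥ v with hx₀def
  have hTx₀ : T *ᵥ x₀ = v := by rw [hx₀def, mulVec_mulVec, hTS, one_mulVec]
  have hx₀C : x₀ ⬝ᵥ C *ᵥ x₀ = v ⬝ᵥ B *ᵥ v := by rw [quad, hTx₀]
  have hx₀x₀ : x₀ ⬝ᵥ x₀ = v ⬝ᵥ A *ᵥ v := (quadA v).symm
  -- eigenvalues of C
  set lam := hC.eigenvalues with hlamdef
  set U := (hC.eigenvectorUnitary : Matrix (Fin d) (Fin d) ℝ) with hUdef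
  have hspec : C = U * diagonal lam * Uᴴ := by
    have := hC.spectral_theorem
    simpa [star_eq_conjTranspose] using this
  have hUU : U * Uᴴ = 1 := by
    rw [← star_eq_conjTranspose]
    exact (Matrix.mem_unitaryGroup_iff).mp hC.eigenvectorUnitary.2
  have hlam1 : ∀ i, 1 ≤ lam i := by
    intro i
    have heq := hC.eigenvalues_eq i
    set u : Fin d → ℝ := ⇑(hC.eigenvectorBasis i) with hudef
    have huu : u ⬝ᵥ u = 1 := by
      have hnorm : ‖hC.eigenvectorBasis i‖ = 1 := hC.eigenvectorBasis.orthonormal.1 i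
      have hinner : (inner ℝ (hC.eigenvectorBasis i) (hC.eigenvectorBasis i) : ℝ) = 1 := by
        rw [real_inner_self_eq_norm_mul_norm, hnorm, mul_one]
      rw [← hinner]
      simp only [hudef, dotProduct, PiLp.inner_apply, RCLike.inner_apply, conj_trivial]
    have heq' : lam i = u ⬝ᵥ C *ᵥ u := by simpa using heq
    rw [heq', ← huu]
    exact key1 u
  have hlam2 : ∃ j, 2 < lam j := by
    by_contra h
    push_neg at h
    have hMpsd : (U * diagonal (fun i => 2 - lam i) * Uᴴ).PosSemidef := by
      apply PosSemidef.mul_mul_conjTranspose_same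
      exact posSemidef_diagonal_iff.mpr fun i => by linarith [h i]
    have hdiag : diagonal (fun i => 2 - lam i) = diagonal (fun _ => (2:ℝ)) - diagonal lam := by
      rw [← diagonal_sub]
    have htwo : U * diagonal (fun _ => (2:ℝ)) * Uᴴ = (2:ℝ) • (1 : Matrix (Fin d) (Fin d) ℝ) := by
      have hd2 : diagonal (fun _ => (2:ℝ)) = (2:ℝ) • (1 : Matrix (Fin d) (Fin d) ℝ) := by
        ext i j
        by_cases h : i = j <;> simp [diagonal, Matrix.one_apply, h]
      rw [hd2, mul_smul_comm, smul_mul_assoc, mul_one, hUU]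
    have hMeq : U * diagonal (fun i => 2 - lam i) * Uᴴ
        = (2:ℝ) • (1 : Matrix (Fin d) (Fin d) ℝ) - C := by
      rw [hdiag, mul_sub, sub_mul, htwo, ← hspec]
    have h0 := hMpsd.dotProduct_mulVec_nonneg x₀
    rw [hMeq] at h0
    simp only [star_trivial, sub_mulVec, dotProduct_sub, sub_nonneg, smul_mulVec,
      one_mulVec, dotProduct_smul, smul_eq_mul] at h0
    rw [hx₀C, hx₀x₀] at h0
    linarith
  have hdetC : C.det = ∏ i, lam i := by simpa using hC.det_eq_prod_eigenvalues
  have h2 : 2 ≤ C.det := by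
    obtain ⟨j, hj⟩ := hlam2
    rw [hdetC, ← Finset.mul_prod_erase Finset.univ lam (Finset.mem_univ j)]
    have hrest : 1 ≤ ∏ i ∈ Finset.univ.erase j, lam i := by
      calc (1:ℝ) = ∏ _i ∈ Finset.univ.erase j, (1:ℝ) := by simp
        _ ≤ ∏ i ∈ Finset.univ.erase j, lam i :=
            Finset.prod_le_prod (fun i _ => by norm_num) (fun i _ => hlam1 i)
    nlinarith
  have hdetT : T.det = (S.det)⁻¹ := by
    rw [hTdef, det_nonsing_inv, Ring.inverse_eq_inv']
  have hdetCval : C.det * A.det = B.det := by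
    rw [hCdef, det_mul, det_mul, ← hSS, det_mul, hdetT]
    field_simp
  nlinarith [hdetA, h2, hdetCval]
end

section
/- Let d ≥ 1, let φ_1, …, φ_n be vectors in ℝ^d with ‖φ_i‖₂ ≤ L for all i, let λ > 0, and define Λ_0 = λ·I and Λ_i = λ·I + Σ_{i'=1}^{i} φ_{i'}·φ_{i'}ᵀ for 1 ≤ i ≤ n. Then for any increasing sequence of indices 0 = i_1 < i_2 < … < i_k = n, Σ_{j=1}^{k−1} min{ Σ_{i = i_j + 1}^{i_{j+1}} φ_iᵀ Λ_{i_j}^{−1} φ_i , 1 } ≤ 6·d·log₂(1 + n·L²/λ). -/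
open Matrix

section Aux

variable {d : ℕ}

private lemma bep_trace_eq_sum_eigenvalues {A : Matrix (Fin d) (Fin d) ℝ} (hA : A.IsHermitian) :
    A.trace = ∑ i, hA.eigenvalues i := by
  simpa using hA.trace_eq_sum_eigenvalues

private lemma bep_eig_le {A : Matrix (Fin d) (Fin d) ℝ} (hA : A.IsHermitian) (c : ℝ)
    (h : ∀ x : Fin d → ℝ, x ⬝ᵥ A.mulVec x ≤ c * (x ⬝ᵥ x)) (i : Fin d) : hA.eigenvalues i ≤ c := by
  have he := hA.eigenvalues_eq i
  set v : Fin d → ℝ := ⇑(hA.eigenvectorBasis i) with hv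
  have h1 : v ⬝ᵥ v = 1 := by
    have hn := hA.eigenvectorBasis.orthonormal.1 i
    have h2 : inner (𝕜 := ℝ) (hA.eigenvectorBasis i) (hA.eigenvectorBasis i) = (1:ℝ) := by
      rw [real_inner_self_eq_norm_sq, hn]; norm_num
    rw [← h2, EuclideanSpace.inner_eq_star_dotProduct]
    simp [v, dotProduct, mul_comm]
  have h2 := h v
  rw [h1, mul_one] at h2
  rw [he]; simpa using h2

private lemma bep_eig_ge {A : Matrix (Fin d) (Fin d) ℝ} (hA : A.IsHermitian) (c : ℝ)
    (h : ∀ x : Fin d → ℝ, c * (x ⬝ᵥ x) ≤ x ⬝ᵥ A.mulVec x) (i : Fin d) : c ≤ hA.eigenvalues i := by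
  have he := hA.eigenvalues_eq i
  set v : Fin d → ℝ := ⇑(hA.eigenvectorBasis i) with hv
  have h1 : v ⬝ᵥ v = 1 := by
    have hn := hA.eigenvectorBasis.orthonormal.1 i
    have h2 : inner (𝕜 := ℝ) (hA.eigenvectorBasis i) (hA.eigenvectorBasis i) = (1:ℝ) := by
      rw [real_inner_self_eq_norm_sq, hn]; norm_num
    rw [← h2, EuclideanSpace.inner_eq_star_dotProduct]
    simp [v, dotProduct, mul_comm]
  have h2 := h v
  rw [h1, mul_one] at h2
  rw [he]; simpa using h2

private lemma bep_one_add_sum_le_prod {ι : Type*} (s : Finset ι) (f : ι → ℝ)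
    (h : ∀ i ∈ s, 1 ≤ f i) : 1 + ∑ i ∈ s, (f i - 1) ≤ ∏ i ∈ s, f i := by
  induction s using Finset.cons_induction with
  | empty => simp
  | cons a s ha ih =>
    rw [Finset.sum_cons, Finset.prod_cons]
    have h1 : 1 ≤ f a := h a (Finset.mem_cons_self a s)
    have ih' := ih fun i hi => h i (Finset.mem_cons_of_mem hi)
    have hp : (1:ℝ) ≤ ∏ i ∈ s, f i := by
      refine le_trans ?_ ih'
      have : 0 ≤ ∑ i ∈ s, (f i - 1) :=
        Finset.sum_nonneg fun i hi => by linarith [h i (Finset.mem_cons_of_mem hi)]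
      linarith
    nlinarith [ih', hp, h1]

private lemma bep_dot_sq_le (v : EuclideanSpace ℝ (Fin d)) (x : Fin d → ℝ) :
    ((v : Fin d → ℝ) ⬝ᵥ x)^2 ≤ ‖v‖^2 * (x ⬝ᵥ x) := by
  let y : EuclideanSpace ℝ (Fin d) := WithLp.toLp 2 x
  have h := real_inner_mul_inner_self_le v y
  have h1 : inner (𝕜 := ℝ) v y = (v : Fin d → ℝ) ⬝ᵥ x := by
    simp [y, PiLp.inner_apply, dotProduct, RCLike.inner_apply, conj_trivial, mul_comm]
  have h2 : inner (𝕜 := ℝ) v v = ‖v‖^2 := real_inner_self_eq_norm_sq v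
  have h3 : inner (𝕜 := ℝ) y y = x ⬝ᵥ x := by
    rw [EuclideanSpace.inner_eq_star_dotProduct]; simp [y]
  rw [h1, h2, h3] at h
  nlinarith [h]

private lemma bep_quad_vecMulVec (v x : Fin d → ℝ) :
    x ⬝ᵥ (Matrix.vecMulVec v v).mulVec x = (v ⬝ᵥ x)^2 := by
  simp only [dotProduct, Matrix.mulVec, Matrix.vecMulVec_apply, dotProduct, pow_two,
    Finset.mul_sum, Finset.sum_mul]
  rw [Finset.sum_comm]
  apply Finset.sum_congr rfl; intro i _
  apply Finset.sum_congr rfl; intro j _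
  ring

private lemma bep_posSemidef_vecMulVec (v : Fin d → ℝ) : (Matrix.vecMulVec v v).PosSemidef := by
  refine Matrix.PosSemidef.of_dotProduct_mulVec_nonneg ?_ ?_
  · ext i j
    simp [Matrix.vecMulVec_apply, Matrix.conjTranspose_apply, mul_comm]
  · intro x
    rw [star_trivial, bep_quad_vecMulVec]
    positivity

private lemma bep_trace_mul_vecMulVec (A : Matrix (Fin d) (Fin d) ℝ) (v : Fin d → ℝ) :
    (A * Matrix.vecMulVec v v).trace = v ⬝ᵥ A.mulVec v := by
  simp only [Matrix.trace, Matrix.diag, Matrix.mul_apply, Matrix.vecMulVec_apply,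
    dotProduct, Matrix.mulVec, dotProduct, Finset.mul_sum]
  apply Finset.sum_congr rfl; intro i _
  apply Finset.sum_congr rfl; intro j _
  ring

private lemma bep_det_ge_one_add_trace {H : Matrix (Fin d) (Fin d) ℝ} (hH : H.IsHermitian)
    (h : ∀ x : Fin d → ℝ, x ⬝ᵥ x ≤ x ⬝ᵥ H.mulVec x) :
    1 + (H.trace - d) ≤ H.det := by
  have hev : ∀ i, 1 ≤ hH.eigenvalues i := bep_eig_ge hH 1 (by simpa using h)
  have hdet : H.det = ∏ i, hH.eigenvalues i := by
    rw [hH.det_eq_prod_eigenvalues]; norm_num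
  have htr : H.trace = ∑ i, hH.eigenvalues i := bep_trace_eq_sum_eigenvalues hH
  have := bep_one_add_sum_le_prod Finset.univ hH.eigenvalues (fun i _ => hev i)
  rw [Finset.sum_sub_distrib, Finset.sum_const, Finset.card_univ] at this
  simp only [Fintype.card_fin, nsmul_eq_mul, mul_one] at this
  rw [hdet, htr]
  linarith [this]

private lemma bep_det_le_pow {A : Matrix (Fin d) (Fin d) ℝ} (hA : A.PosSemidef) (c : ℝ)
    (h : ∀ x : Fin d → ℝ, x ⬝ᵥ A.mulVec x ≤ c * (x ⬝ᵥ x)) :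
    A.det ≤ c ^ d := by
  have hdet : A.det = ∏ i, hA.1.eigenvalues i := by rw [hA.1.det_eq_prod_eigenvalues]; norm_num
  rw [hdet]
  calc ∏ i, hA.1.eigenvalues i ≤ ∏ _i : Fin d, c := by
        refine Finset.prod_le_prod (fun i _ => hA.eigenvalues_nonneg i) (fun i _ => bep_eig_le hA.1 c h i)
    _ = c ^ d := by simp

open scoped MatrixOrder in
private lemma bep_det_add_posSemidef {A B : Matrix (Fin d) (Fin d) ℝ}
    (hA : A.PosDef) (hB : B.PosSemidef) :
    A.det * (1 + (A⁻¹ * B).trace) ≤ (A + B).det := by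
  obtain ⟨S, hSps, hSS⟩ : ∃ S : Matrix (Fin d) (Fin d) ℝ, S.PosSemidef ∧ S * S = A :=
    ⟨CFC.sqrt A, (CFC.sqrt_nonneg A).posSemidef, CFC.sqrt_mul_sqrt_self A hA.posSemidef.nonneg⟩
  have hdetA : 0 < A.det := hA.det_pos
  have hdetS : S.det ≠ 0 := by
    intro h0
    have : A.det = S.det * S.det := by rw [← hSS, Matrix.det_mul]
    rw [h0] at this; simp at this; linarith
  have hSinv1 : S * S⁻¹ = 1 := Matrix.mul_nonsing_inv S hdetS.isUnit
  have hSinv2 : S⁻¹ * S = 1 := Matrix.nonsing_inv_mul S hdetS.isUnit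
  have hSinvH : S⁻¹.IsHermitian := by
    have := hSps.1
    unfold Matrix.IsHermitian at *
    rw [Matrix.conjTranspose_nonsing_inv, this]
  set N := S⁻¹ * B * S⁻¹ with hNdef
  have hN : N.PosSemidef := by
    have := hB.conjTranspose_mul_mul_same (B := S⁻¹)
    rwa [hSinvH.eq] at this
  have hfac : S * (1 + N) * S = A + B := by
    rw [mul_add, add_mul, mul_one, hSS, hNdef]
    congr 1
    calc S * (S⁻¹ * B * S⁻¹) * S = (S * S⁻¹) * B * (S⁻¹ * S) := by noncomm_ring
      _ = B := by rw [hSinv1, hSinv2, one_mul, mul_one]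
  have htr : N.trace = (A⁻¹ * B).trace := by
    rw [hNdef, Matrix.trace_mul_cycle]
    congr 1
    rw [← Matrix.mul_inv_rev, hSS]
  have hquad : ∀ x : Fin d → ℝ, x ⬝ᵥ x ≤ x ⬝ᵥ (1 + N).mulVec x := by
    intro x
    rw [Matrix.add_mulVec, dotProduct_add, Matrix.one_mulVec]
    have := hN.dotProduct_mulVec_nonneg x
    rw [star_trivial] at this
    linarith
  have h1N : (1 + N).IsHermitian := Matrix.isHermitian_one.add hN.1
  have hdet1N := bep_det_ge_one_add_trace h1N hquad
  have htr1N : (1 + N).trace = d + N.trace := by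
    rw [Matrix.trace_add, Matrix.trace_one]; simp
  have hdetfac : (A + B).det = A.det * (1 + N).det := by
    rw [← hfac, Matrix.det_mul, Matrix.det_mul]
    rw [show S.det * (1+N).det * S.det = (S.det * S.det) * (1+N).det by ring,
      ← Matrix.det_mul, hSS]
  rw [hdetfac, ← htr]
  have : 1 + N.trace ≤ (1 + N).det := by rw [htr1N] at hdet1N; linarith
  nlinarith [hdetA, this]

private lemma bep_min_le_two_log {S : ℝ} (hS : 0 ≤ S) : min S 1 ≤ 2 * Real.log (1 + S) := by
  rcases le_or_gt S 1 with h | h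
  · rw [min_eq_left h]
    have h1 : (0:ℝ) < 1 + S := by linarith
    have h2 := Real.log_le_sub_one_of_pos (show (0:ℝ) < (1+S)⁻¹ by positivity)
    rw [Real.log_inv] at h2
    have h3 : Real.log (1 + S) ≥ 1 - (1+S)⁻¹ := by linarith
    have h4 : 1 - (1+S)⁻¹ = S / (1+S) := by field_simp; ring
    have h5 : S / 2 ≤ S / (1+S) := by
      rw [div_le_div_iff₀ (by norm_num) h1]
      nlinarith
    have h6 : S / (1+S) ≤ Real.log (1 + S) := by rw [← h4]; linarith
    linarith
  · rw [min_eq_right h.le]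
    have h2 : Real.log 2 ≤ Real.log (1 + S) := by
      apply Real.log_le_log (by norm_num); linarith
    have := Real.log_two_gt_d9
    linarith

private lemma bep_posSemidef_sum {ι : Type*} (s : Finset ι) (f : ι → Matrix (Fin d) (Fin d) ℝ)
    (h : ∀ i ∈ s, (f i).PosSemidef) : (∑ i ∈ s, f i).PosSemidef := by
  induction s using Finset.cons_induction with
  | empty => simpa using Matrix.PosSemidef.zero
  | cons a s ha ih =>
    rw [Finset.sum_cons]
    exact (h a (Finset.mem_cons_self a s)).add (ih fun i hi => h i (Finset.mem_cons_of_mem hi))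

private lemma bep_sum_mulVec {ι : Type*} (s : Finset ι) (A : ι → Matrix (Fin d) (Fin d) ℝ)
    (x : Fin d → ℝ) : (∑ i ∈ s, A i).mulVec x = ∑ i ∈ s, (A i).mulVec x := by
  induction s using Finset.cons_induction with
  | empty => simp
  | cons a s ha ih => rw [Finset.sum_cons, Finset.sum_cons, Matrix.add_mulVec, ih]

private lemma bep_dotProduct_sum {ι : Type*} (s : Finset ι) (x : Fin d → ℝ)
    (v : ι → Fin d → ℝ) : x ⬝ᵥ (∑ i ∈ s, v i) = ∑ i ∈ s, x ⬝ᵥ v i := by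
  induction s using Finset.cons_induction with
  | empty => simp
  | cons a s ha ih => rw [Finset.sum_cons, Finset.sum_cons, dotProduct_add, ih]

end Aux

/-- Lemma A.6 (blockwise elliptical potential lemma): with `Λ_i = λI + Σ_{i'≤i} φ_{i'}φ_{i'}ᵀ`,
`‖φ_i‖₂ ≤ L`, and any increasing index sequence `0 = i_1 < … < i_k = n`,
`Σ_j min{Σ_{i=i_j+1}^{i_{j+1}} φ_iᵀ Λ_{i_j}⁻¹ φ_i, 1} ≤ 6 d log₂(1 + nL²/λ)`. -/
theorem blockwise_elliptical_potential (d n : ℕ) (hd : 1 ≤ d) (L lam : ℝ) (hlam : 0 < lam)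
    (φ : ℕ → EuclideanSpace ℝ (Fin d)) (hφ : ∀ i ∈ Finset.Icc 1 n, ‖φ i‖ ≤ L)
    (Λ : ℕ → Matrix (Fin d) (Fin d) ℝ)
    (hΛ : ∀ i, Λ i = lam • (1 : Matrix (Fin d) (Fin d) ℝ)
        + ∑ i' ∈ Finset.Icc 1 i, Matrix.vecMulVec (φ i') (φ i'))
    (k : ℕ) (idx : Fin (k + 1) → ℕ) (hmono : StrictMono idx)
    (h0 : idx 0 = 0) (hlast : idx (Fin.last k) = n) :
    ∑ j : Fin k, min (∑ i ∈ Finset.Icc (idx j.castSucc + 1) (idx j.succ),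
        (φ i : Fin d → ℝ) ⬝ᵥ (Λ (idx j.castSucc))⁻¹.mulVec (φ i)) 1
      ≤ 6 * d * Real.logb 2 (1 + n * L ^ 2 / lam) := by
  haveI : Nonempty (Fin d) := ⟨⟨0, hd⟩⟩
  have hL2 : ∀ i ∈ Finset.Icc 1 n, ‖φ i‖^2 ≤ L^2 := by
    intro i hi
    have h1 := hφ i hi
    have h0' : (0:ℝ) ≤ ‖φ i‖ := norm_nonneg _
    nlinarith
  -- positive definiteness
  have hlamI : (lam • (1 : Matrix (Fin d) (Fin d) ℝ)).PosDef := by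
    have he : lam • (1 : Matrix (Fin d) (Fin d) ℝ) = Matrix.diagonal (fun _ => lam) := by
      rw [Matrix.smul_one_eq_diagonal]
    rw [he]
    exact Matrix.posDef_diagonal_iff.mpr (fun _ => hlam)
  have hPSD : ∀ m, (∑ i' ∈ Finset.Icc 1 m, Matrix.vecMulVec (φ i') (φ i')).PosSemidef :=
    fun m => bep_posSemidef_sum _ _ (fun i _ => bep_posSemidef_vecMulVec _)
  have hPD : ∀ m, (Λ m).PosDef := fun m => by
    rw [hΛ m]; exact hlamI.add_posSemidef (hPSD m)
  -- per-block key inequality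
  set f : Fin (k+1) → ℝ := fun j => Real.log (Λ (idx j)).det with hf
  have key : ∀ j : Fin k, min (∑ i ∈ Finset.Icc (idx j.castSucc + 1) (idx j.succ),
      (φ i : Fin d → ℝ) ⬝ᵥ (Λ (idx j.castSucc))⁻¹.mulVec (φ i)) 1
      ≤ 2 * (f j.succ - f j.castSucc) := by
    intro j
    set a := idx j.castSucc with hadef
    set b := idx j.succ with hbdef
    have hab : a ≤ b := (hmono (Fin.castSucc_lt_succ (i := j))).le
    set B := ∑ i ∈ Finset.Icc (a+1) b, Matrix.vecMulVec (φ i : Fin d → ℝ) (φ i) with hBdef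
    have hB : B.PosSemidef := bep_posSemidef_sum _ _ (fun i _ => bep_posSemidef_vecMulVec _)
    have hsplit : Λ b = Λ a + B := by
      rw [hΛ a, hΛ b, add_assoc]
      congr 1
      rw [hBdef]
      rw [show Finset.Icc 1 b = Finset.Ioc 0 b from Finset.Icc_add_one_left_eq_Ioc 0 b,
        show Finset.Icc 1 a = Finset.Ioc 0 a from Finset.Icc_add_one_left_eq_Ioc 0 a,
        show Finset.Icc (a+1) b = Finset.Ioc a b from Finset.Icc_add_one_left_eq_Ioc a b]
      exact (Finset.sum_Ioc_consecutive _ (Nat.zero_le a) hab).symm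
    set S := ∑ i ∈ Finset.Icc (a+1) b, (φ i : Fin d → ℝ) ⬝ᵥ (Λ a)⁻¹.mulVec (φ i) with hSdef
    have hS0 : 0 ≤ S := by
      refine Finset.sum_nonneg fun i _ => ?_
      have := ((hPD a).inv).posSemidef.dotProduct_mulVec_nonneg (φ i : Fin d → ℝ)
      rwa [star_trivial] at this
    have htrS : ((Λ a)⁻¹ * B).trace = S := by
      rw [hBdef, Finset.mul_sum, Matrix.trace_sum]
      exact Finset.sum_congr rfl fun i _ => bep_trace_mul_vecMulVec _ _
    have hdetstep : (Λ a).det * (1 + S) ≤ (Λ b).det := by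
      rw [hsplit, ← htrS]
      exact bep_det_add_posSemidef (hPD a) hB
    have hdeta : 0 < (Λ a).det := (hPD a).det_pos
    have hdetb : 0 < (Λ b).det := (hPD b).det_pos
    have hlog : Real.log (1 + S) ≤ f j.succ - f j.castSucc := by
      have h1 : 1 + S ≤ (Λ b).det / (Λ a).det := by
        rw [le_div_iff₀ hdeta]; linarith [hdetstep]
      have h2 : Real.log (1 + S) ≤ Real.log ((Λ b).det / (Λ a).det) :=
        Real.log_le_log (by linarith) h1
      rw [Real.log_div hdetb.ne' hdeta.ne'] at h2
      simpa [hf, ← hadef, ← hbdef] using h2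
    calc min S 1 ≤ 2 * Real.log (1 + S) := bep_min_le_two_log hS0
      _ ≤ 2 * (f j.succ - f j.castSucc) := by linarith
  -- telescoping
  have htel : ∑ j : Fin k, (f j.succ - f j.castSucc) = f (Fin.last k) - f 0 := by
    set g : ℕ → ℝ := fun m => f ⟨min m k, by omega⟩ with hg
    have hsucc : ∀ j : Fin k, f j.succ = g (j.val + 1) := by
      intro j
      congr 1
      ext
      simp [Nat.min_eq_left (Nat.succ_le_of_lt j.isLt)]
    have hcast : ∀ j : Fin k, f j.castSucc = g j.val := by
      intro j
      congr 1
      ext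
      simp [Nat.min_eq_left j.isLt.le]
    calc ∑ j : Fin k, (f j.succ - f j.castSucc) = ∑ j : Fin k, (g (j.val + 1) - g j.val) := by
          exact Finset.sum_congr rfl fun j _ => by rw [hsucc j, hcast j]
      _ = ∑ i ∈ Finset.range k, (g (i + 1) - g i) :=
          Fin.sum_univ_eq_sum_range (fun i => g (i+1) - g i) k
      _ = g k - g 0 := Finset.sum_range_sub g k
      _ = f (Fin.last k) - f 0 := by
          have e1 : g k = f (Fin.last k) := by
            simp only [hg]; congr 1; apply Fin.ext; simp [Fin.last]
          have e2 : g 0 = f 0 := by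
            simp only [hg]; congr 1
          rw [e1, e2]
  -- bounds on f endpoints
  have hdetn_le : (Λ n).det ≤ (lam + n * L^2) ^ d := by
    apply bep_det_le_pow (hPD n).posSemidef
    intro x
    have hxx : (0:ℝ) ≤ x ⬝ᵥ x := Finset.sum_nonneg fun i _ => mul_self_nonneg _
    rw [hΛ n, Matrix.add_mulVec, dotProduct_add]
    have h1 : x ⬝ᵥ (lam • (1 : Matrix (Fin d) (Fin d) ℝ)).mulVec x = lam * (x ⬝ᵥ x) := by
      rw [Matrix.smul_mulVec, Matrix.one_mulVec, dotProduct_smul]; rfl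
    have h2 : x ⬝ᵥ (∑ i ∈ Finset.Icc 1 n, Matrix.vecMulVec (φ i : Fin d → ℝ) (φ i)).mulVec x
        ≤ (n : ℝ) * (L^2 * (x ⬝ᵥ x)) := by
      rw [bep_sum_mulVec, bep_dotProduct_sum]
      calc ∑ i ∈ Finset.Icc 1 n, x ⬝ᵥ (Matrix.vecMulVec (φ i : Fin d → ℝ) (φ i)).mulVec x
          ≤ ∑ _i ∈ Finset.Icc 1 n, L^2 * (x ⬝ᵥ x) := by
            refine Finset.sum_le_sum fun i hi => ?_
            rw [bep_quad_vecMulVec]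
            calc ((φ i : Fin d → ℝ) ⬝ᵥ x)^2 ≤ ‖φ i‖^2 * (x ⬝ᵥ x) := bep_dot_sq_le _ _
              _ ≤ L^2 * (x ⬝ᵥ x) := by nlinarith [hL2 i hi, hxx]
        _ = (n : ℝ) * (L^2 * (x ⬝ᵥ x)) := by
            rw [Finset.sum_const, Nat.card_Icc]
            simp [nsmul_eq_mul]
    rw [h1]
    nlinarith [h2, hxx]
  have hpos : (0:ℝ) < lam + n * L^2 := by positivity
  have hfn : f (Fin.last k) ≤ d * Real.log (lam + n * L^2) := by
    have h1 : (Λ (idx (Fin.last k))).det ≤ (lam + n * L^2) ^ d := by rw [hlast]; exact hdetn_le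
    have h2 : Real.log (Λ (idx (Fin.last k))).det ≤ Real.log ((lam + n * L^2) ^ d) :=
      Real.log_le_log (hPD _).det_pos h1
    rw [Real.log_pow] at h2
    exact h2
  have hf0 : f 0 = d * Real.log lam := by
    have hΛ0 : Λ (idx 0) = lam • (1 : Matrix (Fin d) (Fin d) ℝ) := by
      rw [h0, hΛ 0]; simp
    have : (Λ (idx 0)).det = lam ^ d := by
      rw [hΛ0, Matrix.det_smul, Matrix.det_one]; simp
    simp only [hf, this, Real.log_pow]
  have hsum : (∑ j : Fin k, min (∑ i ∈ Finset.Icc (idx j.castSucc + 1) (idx j.succ),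
      (φ i : Fin d → ℝ) ⬝ᵥ (Λ (idx j.castSucc))⁻¹.mulVec (φ i)) 1)
      ≤ 2 * (f (Fin.last k) - f 0) := by
    calc (∑ j : Fin k, min (∑ i ∈ Finset.Icc (idx j.castSucc + 1) (idx j.succ),
        (φ i : Fin d → ℝ) ⬝ᵥ (Λ (idx j.castSucc))⁻¹.mulVec (φ i)) 1)
        ≤ ∑ j : Fin k, 2 * (f j.succ - f j.castSucc) := Finset.sum_le_sum fun j _ => key j
      _ = 2 * ∑ j : Fin k, (f j.succ - f j.castSucc) := by rw [Finset.mul_sum]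
      _ = 2 * (f (Fin.last k) - f 0) := by rw [htel]
  have hX : Real.log (1 + n * L^2 / lam) = Real.log (lam + n * L^2) - Real.log lam := by
    rw [show (1 : ℝ) + n * L^2 / lam = (lam + n * L^2) / lam by field_simp,
      Real.log_div hpos.ne' hlam.ne']
  have hlogX : 0 ≤ Real.log (1 + n * L^2 / lam) := by
    apply Real.log_nonneg
    have : (0:ℝ) ≤ n * L^2 / lam := by positivity
    linarith
  have hl2a : (0:ℝ) < Real.log 2 := Real.log_pos (by norm_num)
  have hl2b : Real.log 2 ≤ 1 := by
    have := Real.log_le_sub_one_of_pos (show (0:ℝ) < 2 by norm_num)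
    linarith
  have hdiv : Real.log (1 + n * L^2 / lam) ≤ Real.log (1 + n * L^2 / lam) / Real.log 2 := by
    rw [le_div_iff₀ hl2a]
    nlinarith [hlogX, hl2b, hl2a]
  have hdnn : (0:ℝ) ≤ (d:ℝ) := Nat.cast_nonneg d
  have hend : 2 * (f (Fin.last k) - f 0) ≤ 2 * (d : ℝ) * Real.log (1 + n * L^2 / lam) := by
    rw [hX, hf0]
    nlinarith [hfn, hdnn]
  rw [Real.logb]
  nlinarith [hsum, hend, hdiv, hdnn, hlogX]
end

section
/- Let d ≥ 1, let φ_1, …, φ_n be vectors in ℝ^d with ‖φ_i‖₂ ≤ L for all i, let λ > 0, and define Λ_0 = λ·I and Λ_i = λ·I + Σ_{i'=1}^{i} φ_{i'}·φ_{i'}ᵀ for 1 ≤ i ≤ n. Then for any increasing sequence of indices 0 = i_1 < i_2 < … < i_k = n, the number of indices j ∈ {1, …, k−1} for which Λ_{i_{j+1}} ⪯ 2·Λ_{i_j} fails is at most d·log₂(1 + n·L²/λ). -/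
open Matrix

section AuxDoubling

variable {d : ℕ}


variable {d : ℕ}

lemma shift_spec {C : Matrix (Fin d) (Fin d) ℝ} (hC : C.IsHermitian) (a : ℝ) :
    a • (1 : Matrix (Fin d) (Fin d) ℝ) + C =
      (hC.eigenvectorUnitary : Matrix (Fin d) (Fin d) ℝ) *
        diagonal (fun i => a + hC.eigenvalues i) *
        star (hC.eigenvectorUnitary : Matrix (Fin d) (Fin d) ℝ) := by
  set V := (hC.eigenvectorUnitary : Matrix (Fin d) (Fin d) ℝ)
  have hV : V * star V = 1 := (Matrix.mem_unitaryGroup_iff).mp hC.eigenvectorUnitary.2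
  have h1 : a • (1 : Matrix (Fin d) (Fin d) ℝ) = V * (a • 1) * star V := by
    rw [Matrix.mul_smul, Matrix.smul_mul, mul_one, hV]
  have h2 : C = V * diagonal (RCLike.ofReal ∘ hC.eigenvalues) * star V := hC.spectral_theorem
  have key : V * (a • 1) * star V + V * diagonal (RCLike.ofReal ∘ hC.eigenvalues) * star V
      = V * (a • 1 + diagonal (RCLike.ofReal ∘ hC.eigenvalues)) * star V := by
    rw [Matrix.mul_add, Matrix.add_mul]
  calc a • (1 : Matrix (Fin d) (Fin d) ℝ) + C
      = V * (a • 1) * star V + V * diagonal (RCLike.ofReal ∘ hC.eigenvalues) * star V := by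
        rw [← h1, ← h2]
    _ = V * (a • 1 + diagonal (RCLike.ofReal ∘ hC.eigenvalues)) * star V := key
    _ = _ := by
        congr 2
        rw [Matrix.smul_one_eq_diagonal, Matrix.diagonal_add]
        rfl

lemma det_shift {C : Matrix (Fin d) (Fin d) ℝ} (hC : C.IsHermitian) (a : ℝ) :
    (a • (1 : Matrix (Fin d) (Fin d) ℝ) + C).det = ∏ i, (a + hC.eigenvalues i) := by
  set V := (hC.eigenvectorUnitary : Matrix (Fin d) (Fin d) ℝ)
  have hV : V * star V = 1 := (Matrix.mem_unitaryGroup_iff).mp hC.eigenvectorUnitary.2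
  rw [shift_spec hC a, Matrix.det_mul_right_comm, hV, one_mul, Matrix.det_diagonal]

open scoped MatrixOrder in
lemma det_step {A M : Matrix (Fin d) (Fin d) ℝ} (hA : A.PosDef) (hM : M.PosSemidef) :
    A.det ≤ (A + M).det ∧ (¬ (A - M).PosSemidef → 2 * A.det ≤ (A + M).det) := by
  set S := CFC.sqrt A with hSdef
  have hS : S.PosSemidef := (CFC.sqrt_nonneg A).posSemidef
  have hSS : S * S = A := CFC.sqrt_mul_sqrt_self A hA.posSemidef.nonneg
  have hdetA : 0 < A.det := hA.det_pos
  have hdS : IsUnit S.det := by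
    refine isUnit_iff_ne_zero.mpr fun h => ?_
    have : A.det = 0 := by rw [← hSS, Matrix.det_mul, h, mul_zero]
    exact hdetA.ne' this
  have hSinv : S * S⁻¹ = 1 := Matrix.mul_nonsing_inv _ hdS
  have hinvS : S⁻¹ * S = 1 := Matrix.nonsing_inv_mul _ hdS
  have hSh : Sᴴ = S := hS.1
  have hSinvH : (S⁻¹)ᴴ = S⁻¹ := by rw [Matrix.conjTranspose_nonsing_inv, hSh]
  set C := S⁻¹ * M * S⁻¹ with hCdef
  have hC : C.PosSemidef := by
    have := hM.conjTranspose_mul_mul_same S⁻¹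
    rwa [hSinvH] at this
  have hSCS : S * C * S = M := by
    have h1 : S * C * S = (S * S⁻¹) * M * (S⁻¹ * S) := by
      simp only [hCdef, Matrix.mul_assoc]
    rw [h1, hSinv, hinvS, one_mul, mul_one]
  have hkey : A + M = S * ((1:ℝ) • 1 + C) * S := by
    rw [Matrix.mul_add, Matrix.add_mul, hSCS, one_smul, mul_one, hSS]
  have hdet : (A + M).det = A.det * ((1:ℝ) • (1 : Matrix (Fin d) (Fin d) ℝ) + C).det := by
    rw [hkey, Matrix.det_mul, Matrix.det_mul, ← hSS, Matrix.det_mul]; ring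
  have hprod : ((1:ℝ) • (1 : Matrix (Fin d) (Fin d) ℝ) + C).det
      = ∏ i, (1 + hC.1.eigenvalues i) := det_shift hC.1 1
  have hfac : ∀ i, (1:ℝ) ≤ 1 + hC.1.eigenvalues i := fun i => by
    have := hC.eigenvalues_nonneg i; linarith
  constructor
  · have h1 : (1:ℝ) ≤ ∏ i, (1 + hC.1.eigenvalues i) := by
      have := Finset.prod_le_prod (s := Finset.univ) (f := fun _ : Fin d => (1:ℝ))
        (g := fun i => 1 + hC.1.eigenvalues i) (fun i _ => zero_le_one) (fun i _ => hfac i)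
      simpa using this
    rw [hdet, hprod]; nlinarith
  · intro hbad
    have hex : ∃ i, 1 < hC.1.eigenvalues i := by
      by_contra hno
      push_neg at hno
      apply hbad
      set V := (hC.1.eigenvectorUnitary : Matrix (Fin d) (Fin d) ℝ)
      have hV : V * star V = 1 := (Matrix.mem_unitaryGroup_iff).mp hC.1.eigenvectorUnitary.2
      have hCspec : C = V * diagonal (RCLike.ofReal ∘ hC.1.eigenvalues) * star V := hC.1.spectral_theorem
      have h1C : (1 : Matrix (Fin d) (Fin d) ℝ) - C
          = V * ((1 : Matrix (Fin d) (Fin d) ℝ) - diagonal (RCLike.ofReal ∘ hC.1.eigenvalues)) * star V := by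
        rw [Matrix.mul_sub, Matrix.sub_mul, ← hCspec, Matrix.mul_one, hV]
      have hdiag : ((1 : Matrix (Fin d) (Fin d) ℝ) - diagonal (RCLike.ofReal ∘ hC.1.eigenvalues))
          = diagonal (fun i => 1 - hC.1.eigenvalues i) := by
        rw [← Matrix.diagonal_one, Matrix.diagonal_sub]; rfl
      have hpsd : ((1 : Matrix (Fin d) (Fin d) ℝ) - C).PosSemidef := by
        rw [h1C, hdiag]
        have hd : Matrix.PosSemidef (diagonal (fun i => 1 - hC.1.eigenvalues i)) :=
          Matrix.PosSemidef.diagonal fun i => by have := hno i; simp; linarith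
        rw [Matrix.star_eq_conjTranspose]
        exact hd.mul_mul_conjTranspose_same V
      have hAM : A - M = S * ((1 : Matrix (Fin d) (Fin d) ℝ) - C) * S := by
        rw [Matrix.mul_sub, Matrix.sub_mul, hSCS, mul_one, hSS]
      rw [hAM]
      have := hpsd.conjTranspose_mul_mul_same S
      rwa [hSh] at this
    obtain ⟨i₀, hi₀⟩ := hex
    have h2le : (2:ℝ) ≤ ∏ i, (1 + hC.1.eigenvalues i) := by
      rw [← Finset.mul_prod_erase Finset.univ _ (Finset.mem_univ i₀)]
      have hrest : (1:ℝ) ≤ ∏ i ∈ Finset.univ.erase i₀, (1 + hC.1.eigenvalues i) := by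
        have := Finset.prod_le_prod (s := Finset.univ.erase i₀) (f := fun _ : Fin d => (1:ℝ))
          (g := fun i => 1 + hC.1.eigenvalues i) (fun i _ => zero_le_one) (fun i _ => hfac i)
        simpa using this
      nlinarith
    rw [hdet, hprod]; nlinarith

lemma psd_sum {ι : Type*} {s : Finset ι} {f : ι → Matrix (Fin d) (Fin d) ℝ}
    (h : ∀ i ∈ s, (f i).PosSemidef) : (∑ i ∈ s, f i).PosSemidef :=
  Finset.sum_induction f _ (fun _ _ ha hb => ha.add hb) Matrix.PosSemidef.zero h

lemma smul_one_posdef {c : ℝ} (hc : 0 < c) : ((c • (1 : Matrix (Fin d) (Fin d) ℝ))).PosDef := by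
  rw [Matrix.smul_one_eq_diagonal]
  exact Matrix.posDef_diagonal_iff.mpr fun _ => hc

lemma trace_vecMulVec' (x : Fin d → ℝ) : (vecMulVec x x).trace = ∑ j, x j ^ 2 := by
  simp [Matrix.trace, Matrix.diag, Matrix.vecMulVec_apply, sq]

lemma dot_self_eq_one {v : EuclideanSpace ℝ (Fin d)} (hv : ‖v‖ = 1) :
    dotProduct (⇑v) (⇑v) = 1 := by
  have h := EuclideanSpace.norm_eq v
  rw [hv] at h
  have h2 : ∑ i, ‖v i‖ ^ 2 = 1 := Real.sqrt_eq_one.mp h.symm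
  simpa [dotProduct, sq_abs, sq] using h2

lemma det_lam_bound {n : ℕ} (hd : 1 ≤ d) {L lam : ℝ} (hlam : 0 < lam)
    (φ : ℕ → EuclideanSpace ℝ (Fin d)) (hφ : ∀ i ∈ Finset.Icc 1 n, ‖φ i‖ ≤ L)
    {A : Matrix (Fin d) (Fin d) ℝ}
    (hA : A = lam • (1 : Matrix (Fin d) (Fin d) ℝ)
        + ∑ i' ∈ Finset.Icc 1 n, Matrix.vecMulVec (φ i') (φ i')) :
    A.det ≤ (lam + n * L ^ 2) ^ d := by
  have hpsdsum : (∑ i' ∈ Finset.Icc 1 n, Matrix.vecMulVec (φ i') (φ i')).PosSemidef :=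
    psd_sum fun i _ => by
      have h := Matrix.posSemidef_self_mul_conjTranspose (Matrix.replicateCol (Fin 1) (φ i))
      have he : Matrix.replicateCol (Fin 1) (φ i) * (Matrix.replicateCol (Fin 1) (φ i))ᴴ
          = vecMulVec (φ i) (φ i) := by
        ext a b; simp [Matrix.mul_apply, Matrix.vecMulVec_apply, Matrix.replicateCol_apply]
      rwa [he] at h
  have hPD : A.PosDef := by
    rw [hA]; exact (smul_one_posdef hlam).add_posSemidef hpsdsum
  have hH : A.IsHermitian := hPD.1
  set μ := hH.eigenvalues with hμ
  -- trace bound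
  have htr : A.trace ≤ d * lam + n * L ^ 2 := by
    have hterm : ∀ i ∈ Finset.Icc 1 n, (vecMulVec (φ i) (φ i)).trace ≤ L ^ 2 := by
      intro i hi
      rw [trace_vecMulVec']
      have h1 : ∑ j, φ i j ^ 2 = ‖φ i‖ ^ 2 := by
        rw [EuclideanSpace.norm_eq, Real.sq_sqrt (Finset.sum_nonneg fun j _ => sq_nonneg _)]
        simp [sq_abs]
      rw [h1]
      have h0 : (0:ℝ) ≤ ‖φ i‖ := norm_nonneg _
      nlinarith [hφ i hi]
    have hsum : (∑ i' ∈ Finset.Icc 1 n, Matrix.vecMulVec (φ i') (φ i')).trace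
        ≤ n * L ^ 2 := by
      rw [Matrix.trace_sum]
      calc ∑ i' ∈ Finset.Icc 1 n, (vecMulVec (φ i') (φ i')).trace
          ≤ ∑ _i' ∈ Finset.Icc 1 n, L ^ 2 := Finset.sum_le_sum hterm
        _ = n * L ^ 2 := by rw [Finset.sum_const, Nat.card_Icc]; simp [nsmul_eq_mul]
    rw [hA, Matrix.trace_add, Matrix.trace_smul, Matrix.trace_one]
    simp only [smul_eq_mul, Fintype.card_fin] at *
    have : lam * d = d * lam := by ring
    linarith
  -- sum of eigenvalues equals trace
  have hsumeig : ∑ i, μ i = A.trace := by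
    have hspec : A = (hH.eigenvectorUnitary : Matrix (Fin d) (Fin d) ℝ) * diagonal (RCLike.ofReal ∘ hH.eigenvalues) * star (hH.eigenvectorUnitary : Matrix (Fin d) (Fin d) ℝ) := hH.spectral_theorem
    set V := (hH.eigenvectorUnitary : Matrix (Fin d) (Fin d) ℝ)
    have hV : star V * V = 1 := (Matrix.mem_unitaryGroup_iff').mp hH.eigenvectorUnitary.2
    calc ∑ i, μ i = (diagonal (RCLike.ofReal ∘ μ) : Matrix (Fin d) (Fin d) ℝ).trace := by
          simp [Matrix.trace_diagonal]
      _ = (V * diagonal (RCLike.ofReal ∘ μ) * star V).trace := by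
          rw [Matrix.trace_mul_cycle, hV, one_mul]
      _ = A.trace := by rw [← hspec]
  -- each eigenvalue at least lam
  have hlo : ∀ i, lam ≤ μ i := by
    intro i
    have hv := hH.mulVec_eigenvectorBasis i
    set v := ⇑(hH.eigenvectorBasis i) with hvdef
    have hnorm : dotProduct v v = 1 :=
      dot_self_eq_one (hH.eigenvectorBasis.orthonormal.1 i)
    have hpsd2 : (A - lam • (1 : Matrix (Fin d) (Fin d) ℝ)).PosSemidef := by
      have : A - lam • (1 : Matrix (Fin d) (Fin d) ℝ)
          = ∑ i' ∈ Finset.Icc 1 n, Matrix.vecMulVec (φ i') (φ i') := by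
        rw [hA]; abel
      rw [this]; exact hpsdsum
    have hq := hpsd2.dotProduct_mulVec_nonneg v
    have hstar : star v = v := by
      funext j; simp
    rw [hstar] at hq
    have hmv : (A - lam • (1 : Matrix (Fin d) (Fin d) ℝ)) *ᵥ v = μ i • v - lam • v := by
      rw [Matrix.sub_mulVec, hv, Matrix.smul_mulVec, Matrix.one_mulVec]
    rw [hmv] at hq
    have : dotProduct v (μ i • v - lam • v) = (μ i - lam) * dotProduct v v := by
      simp [dotProduct_sub, dotProduct_smul, smul_eq_mul]; ring
    rw [this, hnorm, mul_one] at hq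
    linarith
  -- each eigenvalue at most lam + n L^2
  have hhi : ∀ i, μ i ≤ lam + n * L ^ 2 := by
    intro i
    have hsplit : μ i + ∑ j ∈ Finset.univ.erase i, μ j = ∑ j, μ j :=
      Finset.add_sum_erase _ _ (Finset.mem_univ i)
    have hrest : ((d - 1 : ℕ) : ℝ) * lam ≤ ∑ j ∈ Finset.univ.erase i, μ j := by
      have := Finset.card_nsmul_le_sum (Finset.univ.erase i) μ lam fun j _ => hlo j
      rwa [Finset.card_erase_of_mem (Finset.mem_univ i), Finset.card_univ,
        Fintype.card_fin, nsmul_eq_mul] at this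
    have hcast : ((d - 1 : ℕ) : ℝ) = (d : ℝ) - 1 := by
      rw [Nat.cast_sub hd]; simp
    rw [hcast] at hrest
    have h1d : (1:ℝ) ≤ (d:ℝ) := by exact_mod_cast hd
    nlinarith [hsumeig, htr]
  -- conclude
  have hdet : A.det = ∏ i, μ i := by
    have := hH.det_eq_prod_eigenvalues
    simpa using this
  rw [hdet]
  calc ∏ i, μ i ≤ ∏ _i : Fin d, (lam + n * L ^ 2) :=
      Finset.prod_le_prod (fun i _ => le_of_lt (lt_of_lt_of_le hlam (hlo i)))
        (fun i _ => hhi i)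
    _ = (lam + n * L ^ 2) ^ d := by rw [Finset.prod_const, Finset.card_univ, Fintype.card_fin]

lemma vmv_psd {d : ℕ} (x : Fin d → ℝ) : (Matrix.vecMulVec x x).PosSemidef := by
  have h := Matrix.posSemidef_self_mul_conjTranspose (Matrix.replicateCol (Fin 1) x)
  have he : Matrix.replicateCol (Fin 1) x * (Matrix.replicateCol (Fin 1) x)ᴴ = vecMulVec x x := by
    ext a b; simp [Matrix.mul_apply, Matrix.vecMulVec_apply, Matrix.replicateCol_apply]
  rwa [he] at h

end AuxDoubling

/-- Doubling-index bound in Lemma A.6: with `Λ_i = λI + Σ_{i'≤i} φ_{i'}φ_{i'}ᵀ`, `‖φ_i‖₂ ≤ L`,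
and any increasing index sequence `0 = i_1 < … < i_k = n`, the number of blocks `j` for which
`Λ_{i_{j+1}} ⪯ 2 Λ_{i_j}` fails is at most `d log₂(1 + nL²/λ)`. -/
theorem doubling_indices_bound (d n : ℕ) (hd : 1 ≤ d) (L lam : ℝ) (hlam : 0 < lam)
    (φ : ℕ → EuclideanSpace ℝ (Fin d)) (hφ : ∀ i ∈ Finset.Icc 1 n, ‖φ i‖ ≤ L)
    (Λ : ℕ → Matrix (Fin d) (Fin d) ℝ)
    (hΛ : ∀ i, Λ i = lam • (1 : Matrix (Fin d) (Fin d) ℝ)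
        + ∑ i' ∈ Finset.Icc 1 i, Matrix.vecMulVec (φ i') (φ i'))
    (k : ℕ) (idx : Fin (k + 1) → ℕ) (hmono : StrictMono idx)
    (h0 : idx 0 = 0) (hlast : idx (Fin.last k) = n) :
    ({j : Fin k | ¬ ((2 : ℝ) • Λ (idx j.castSucc) - Λ (idx j.succ)).PosSemidef}.ncard : ℝ)
      ≤ d * Real.logb 2 (1 + n * L ^ 2 / lam) := by
  classical
  -- basic facts about Λ
  have hIcc : ∀ i : ℕ, Finset.Icc 1 i = Finset.Ioc 0 i := fun i => by ext x; simp only [Finset.mem_Icc, Finset.mem_Ioc]; omega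
  have hPD : ∀ i, (Λ i).PosDef := fun i => by
    rw [hΛ i]
    exact (smul_one_posdef hlam).add_posSemidef (psd_sum fun i' _ => vmv_psd (φ i'))
  have hdiff : ∀ a b : ℕ, a ≤ b →
      Λ b - Λ a = ∑ i' ∈ Finset.Ioc a b, Matrix.vecMulVec (φ i') (φ i') := by
    intro a b hab
    have hsum := Finset.sum_Ioc_consecutive
      (fun i' => Matrix.vecMulVec (φ i') (φ i') : ℕ → Matrix (Fin d) (Fin d) ℝ)
      (Nat.zero_le a) hab
    rw [hΛ a, hΛ b, hIcc, hIcc, ← hsum]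
    abel
  have hMpsd : ∀ a b : ℕ, a ≤ b → (Λ b - Λ a).PosSemidef := fun a b hab => by
    rw [hdiff a b hab]; exact psd_sum fun i' _ => vmv_psd (φ i')
  -- the bad set as a Finset
  set Bad : Finset (Fin k) := Finset.univ.filter
    (fun j => ¬ ((2 : ℝ) • Λ (idx j.castSucc) - Λ (idx j.succ)).PosSemidef) with hBad
  have hset : {j : Fin k | ¬ ((2 : ℝ) • Λ (idx j.castSucc) - Λ (idx j.succ)).PosSemidef}
      = ↑Bad := by ext j; simp [hBad]
  rw [hset, Set.ncard_coe_finset]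
  set F : ℕ → Finset (Fin k) := fun m => Finset.filter (fun j : Fin k => (j:ℕ) < m) Bad with hF
  -- inductive doubling bound
  have key : ∀ m : ℕ, ∀ hm : m ≤ k,
      (2:ℝ) ^ ((F m).card) * lam ^ d
        ≤ (Λ (idx ⟨m, Nat.lt_succ_of_le hm⟩)).det := by
    intro m
    induction m with
    | zero =>
      intro hm
      have h1 : F 0 = ∅ := by
        rw [hF]; apply Finset.filter_false_of_mem; intro j _; omega
      have h2 : (⟨0, Nat.lt_succ_of_le hm⟩ : Fin (k+1)) = 0 := rfl
      rw [h1, h2, h0, hΛ 0]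
      simp only [Finset.card_empty, pow_zero, one_mul, Finset.Icc_self,
        Finset.Icc_eq_empty_of_lt Nat.zero_lt_one, Finset.sum_empty, add_zero]
      rw [Matrix.det_smul, Matrix.det_one, Fintype.card_fin, mul_one]
    | succ m ih =>
      intro hm
      have hmk : m < k := hm
      have hm' : m ≤ k := le_of_lt hmk
      set j₀ : Fin k := ⟨m, hmk⟩ with hj₀
      have hcastSucc : (j₀.castSucc : Fin (k+1)) = ⟨m, Nat.lt_succ_of_le hm'⟩ := rfl
      have hsucc : (j₀.succ : Fin (k+1)) = ⟨m+1, Nat.lt_succ_of_le hm⟩ := rfl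
      set a := idx ⟨m, Nat.lt_succ_of_le hm'⟩ with ha
      set b := idx ⟨m+1, Nat.lt_succ_of_le hm⟩ with hb
      have hab : a ≤ b := le_of_lt (hmono (by simp [Fin.lt_def]))
      have hA : (Λ a).PosDef := hPD a
      have hM : (Λ b - Λ a).PosSemidef := hMpsd a b hab
      have hadd : Λ a + (Λ b - Λ a) = Λ b := by abel
      have hsub : Λ a - (Λ b - Λ a) = (2:ℝ) • Λ a - Λ b := by
        rw [two_smul]; abel
      obtain ⟨hmono', hdouble⟩ := det_step hA hM
      rw [hadd] at hmono' hdouble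
      rw [hsub] at hdouble
      have hpos : (0:ℝ) < (2:ℝ) ^ ((F m).card) * lam ^ d :=
        mul_pos (pow_pos two_pos _) (pow_pos hlam _)
      by_cases hjb : j₀ ∈ Bad
      · -- doubling case
        have hfil : F (m+1) = insert j₀ (F m) := by
          ext j
          simp only [hF, Finset.mem_filter, Finset.mem_insert]
          constructor
          · rintro ⟨hjB, hlt⟩
            rcases Nat.lt_succ_iff_lt_or_eq.mp hlt with h | h
            · exact Or.inr ⟨hjB, h⟩
            · exact Or.inl (Fin.ext h)
          · rintro (rfl | ⟨hjB, hlt⟩)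
            · exact ⟨hjb, Nat.lt_succ_self m⟩
            · exact ⟨hjB, Nat.lt_succ_of_lt hlt⟩
        have hnotmem : j₀ ∉ F m := by
          simp [hF, hj₀]
        rw [hfil, Finset.card_insert_of_notMem hnotmem, pow_succ]
        have hbadj : ¬ ((2:ℝ) • Λ a - Λ b).PosSemidef := by
          have := (Finset.mem_filter.mp hjb).2
          simpa [hcastSucc, hsucc, ← ha, ← hb] using this
        have h2 := hdouble hbadj
        calc (2:ℝ) ^ (F m).card * 2 * lam ^ d
            = 2 * ((2:ℝ) ^ (F m).card * lam ^ d) := by ring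
          _ ≤ 2 * (Λ a).det := by
              have := ih hm'
              linarith
          _ ≤ (Λ b).det := h2
      · -- non-doubling case
        have hfil : F (m+1) = F m := by
          ext j
          simp only [hF, Finset.mem_filter]
          constructor
          · rintro ⟨hjB, hlt⟩
            rcases Nat.lt_succ_iff_lt_or_eq.mp hlt with h | h
            · exact ⟨hjB, h⟩
            · exact absurd hjB (by rwa [show j = j₀ from Fin.ext h])
          · rintro ⟨hjB, hlt⟩
            exact ⟨hjB, Nat.lt_succ_of_lt hlt⟩
        rw [hfil]
        exact le_trans (ih hm') hmono'
  -- apply at m = k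
  have hkey := key k le_rfl
  have hfin : F k = Bad := by
    rw [hF]; apply Finset.filter_true_of_mem; intro j _; exact j.isLt
  have hlastfin : (⟨k, Nat.lt_succ_of_le le_rfl⟩ : Fin (k+1)) = Fin.last k := rfl
  rw [hfin, hlastfin, hlast] at hkey
  have hub : (Λ n).det ≤ (lam + n * L ^ 2) ^ d := det_lam_bound hd hlam φ hφ (hΛ n)
  -- arithmetic conclusion
  set mC := Bad.card with hmC
  have hmain : (2:ℝ) ^ mC * lam ^ d ≤ (lam + n * L ^ 2) ^ d := le_trans hkey hub
  have hnl2 : (0:ℝ) ≤ (n:ℝ) * L ^ 2 := mul_nonneg (Nat.cast_nonneg n) (sq_nonneg L)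
  set t : ℝ := 1 + n * L ^ 2 / lam with ht
  have ht1 : (1:ℝ) ≤ t := by
    rw [ht]
    have : 0 ≤ (n:ℝ) * L ^ 2 / lam := div_nonneg hnl2 (le_of_lt hlam)
    linarith
  have hfactor : lam + n * L ^ 2 = lam * t := by
    rw [ht]; field_simp
  have h2t : (2:ℝ) ^ mC ≤ t ^ d := by
    have hlpow : (0:ℝ) < lam ^ d := pow_pos hlam d
    rw [hfactor, mul_pow, mul_comm (lam ^ d)] at hmain
    exact le_of_mul_le_mul_right hmain hlpow
  have hlogb : (mC : ℝ) ≤ (d:ℝ) * Real.logb 2 t := by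
    have h1 : Real.logb 2 ((2:ℝ) ^ mC) = mC := by
      rw [Real.logb_pow]; simp [Real.logb_self_eq_one]
    have h2 : Real.logb 2 ((2:ℝ) ^ mC) ≤ Real.logb 2 (t ^ d) :=
      Real.logb_le_logb_of_le one_lt_two (pow_pos two_pos mC) h2t
    rw [h1, Real.logb_pow] at h2
    exact h2
  exact hlogb
end

section
/- Let d ≥ 1, let φ_1, …, φ_n be vectors in ℝ^d with ‖φ_i‖₂ ≤ L for all i, let λ > 0, and define Λ_0 = λ·I and Λ_i = λ·I + Σ_{i'=1}^{i} φ_{i'}·φ_{i'}ᵀ for 1 ≤ i ≤ n. Then Σ_{i=1}^{n} φ_iᵀ Λ_i^{−1} φ_i ≤ d·ln(1 + n·L²/λ). -/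
open Matrix

section Helpers

variable {d : ℕ}

private lemma ell_sum_mulVec {ι : Type*} (s : Finset ι) (M : ι → Matrix (Fin d) (Fin d) ℝ)
    (x : Fin d → ℝ) : (∑ i ∈ s, M i) *ᵥ x = ∑ i ∈ s, M i *ᵥ x := by
  induction s using Finset.cons_induction with
  | empty => simp [Matrix.mulVec]
  | cons a s ha ih => rw [Finset.sum_cons, Finset.sum_cons, add_mulVec, ih]

private lemma ell_dotProduct_sum {ι : Type*} (s : Finset ι) (x : Fin d → ℝ) (f : ι → Fin d → ℝ) :
    x ⬝ᵥ (∑ i ∈ s, f i) = ∑ i ∈ s, x ⬝ᵥ f i := by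
  induction s using Finset.cons_induction with
  | empty => simp
  | cons a s ha ih => rw [Finset.sum_cons, Finset.sum_cons, dotProduct_add, ih]

private lemma ell_dotP_eq_inner (x y : EuclideanSpace ℝ (Fin d)) :
    (x : Fin d → ℝ) ⬝ᵥ (y : Fin d → ℝ) = inner ℝ x y := by
  simp [PiLp.inner_apply, dotProduct, mul_comm]

private lemma ell_vecMulVec_posSemidef (v : Fin d → ℝ) : (vecMulVec v v).PosSemidef := by
  rw [vecMulVec_eq Unit]
  have h : (replicateRow Unit v)ᴴ = replicateCol Unit v := by
    ext i j; simp [Matrix.conjTranspose_apply]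
  rw [← h]
  exact Matrix.posSemidef_conjTranspose_mul_self _

private lemma ell_smul_one_posDef {lam : ℝ} (hlam : 0 < lam) :
    (lam • (1 : Matrix (Fin d) (Fin d) ℝ)).PosDef := by
  have h : lam • (1 : Matrix (Fin d) (Fin d) ℝ) = Matrix.diagonal (fun _ => lam) := by
    ext i j; by_cases h : i = j <;> simp [Matrix.one_apply, Matrix.diagonal_apply, h]
  rw [h]
  exact Matrix.posDef_diagonal_iff.mpr fun _ => hlam

private lemma ell_det_sub_vecMulVec {A : Matrix (Fin d) (Fin d) ℝ} (hA : IsUnit A.det)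
    (u : Fin d → ℝ) : (A - vecMulVec u u).det = A.det * (1 - u ⬝ᵥ A⁻¹ *ᵥ u) := by
  have h1 : A - vecMulVec u u = A + replicateCol Unit (-u) * replicateRow Unit u := by
    rw [vecMulVec_eq Unit, sub_eq_add_neg]
    congr 1
    ext i j
    simp [Matrix.mul_apply]
  have h2 : (replicateRow Unit u * A⁻¹ * replicateCol Unit (-u)) default default = -(u ⬝ᵥ A⁻¹ *ᵥ u) := by
    simp only [Matrix.mul_apply, Matrix.replicateCol_apply, Matrix.replicateRow_apply, Matrix.mulVec,
      dotProduct, Finset.mul_sum, Finset.sum_mul, Pi.neg_apply]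
    rw [Finset.sum_comm]
    simp [Finset.mul_sum, mul_comm, mul_left_comm]
  rw [h1, det_add_replicateCol_mul_replicateRow hA]
  congr 1
  rw [Matrix.det_unique]
  simp only [Matrix.add_apply, Matrix.one_apply_eq, h2]
  ring

private lemma ell_det_le (n : ℕ) (lam : ℝ) (φ : ℕ → EuclideanSpace ℝ (Fin d)) (L : ℝ)
    (hφ : ∀ i ∈ Finset.Icc 1 n, ‖φ i‖ ≤ L)
    (hPD : (lam • (1:Matrix (Fin d) (Fin d) ℝ)
      + ∑ i' ∈ Finset.Icc 1 n, vecMulVec (φ i') (φ i')).PosDef) :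
    (lam • (1:Matrix (Fin d) (Fin d) ℝ) + ∑ i' ∈ Finset.Icc 1 n, vecMulVec (φ i') (φ i')).det
      ≤ (lam + n * L ^ 2) ^ d := by
  set A := lam • (1:Matrix (Fin d) (Fin d) ℝ) + ∑ i' ∈ Finset.Icc 1 n, vecMulVec (φ i') (φ i')
    with hA
  have hH := hPD.isHermitian
  have hdet : A.det = ∏ j, hH.eigenvalues j := hH.det_eq_prod_eigenvalues
  rw [hdet]
  have hcard : (Finset.univ : Finset (Fin d)).card = d := by simp
  calc ∏ j, hH.eigenvalues j ≤ ∏ _j : Fin d, (lam + n * L ^ 2) := by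
        apply Finset.prod_le_prod
        · exact fun j _ => (hPD.eigenvalues_pos j).le
        · intro j _
          set v : EuclideanSpace ℝ (Fin d) := hH.eigenvectorBasis j with hv
          have hnorm : ‖v‖ = 1 := hH.eigenvectorBasis.orthonormal.1 j
          have he : hH.eigenvalues j = (v : Fin d → ℝ) ⬝ᵥ A *ᵥ (v : Fin d → ℝ) := by
            rw [hH.eigenvalues_eq]
            simp only [RCLike.re_to_real, star_trivial]
            rfl
          rw [he]
          have hAv : A *ᵥ (v : Fin d → ℝ)
              = lam • (v : Fin d → ℝ)
                + ∑ i ∈ Finset.Icc 1 n, ((φ i : Fin d → ℝ) ⬝ᵥ v) • (φ i : Fin d → ℝ) := by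
            rw [hA, add_mulVec, smul_mulVec, one_mulVec]
            congr 1
            rw [ell_sum_mulVec]
            exact Finset.sum_congr rfl fun i _ => by
              ext k
              simp [Matrix.mulVec, dotProduct, vecMulVec_apply, Finset.sum_mul,
                Finset.mul_sum, mul_comm, mul_left_comm, mul_assoc]
          rw [hAv, dotProduct_add, dotProduct_smul]
          have hvv : (v : Fin d → ℝ) ⬝ᵥ (v : Fin d → ℝ) = 1 := by
            rw [ell_dotP_eq_inner, real_inner_self_eq_norm_sq, hnorm]; norm_num
          have hsum : (v : Fin d → ℝ) ⬝ᵥ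
              (∑ i ∈ Finset.Icc 1 n, ((φ i : Fin d → ℝ) ⬝ᵥ v) • (φ i : Fin d → ℝ))
              ≤ ∑ _i ∈ Finset.Icc 1 n, L ^ 2 := by
            rw [ell_dotProduct_sum]
            apply Finset.sum_le_sum
            intro i hi
            rw [dotProduct_smul]
            have hcs : |(φ i : Fin d → ℝ) ⬝ᵥ (v : Fin d → ℝ)| ≤ L := by
              rw [ell_dotP_eq_inner]
              calc |inner ℝ (φ i) v| ≤ ‖φ i‖ * ‖v‖ := abs_real_inner_le_norm _ _
                _ ≤ L := by rw [hnorm, mul_one]; exact hφ i hi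
            have hq : ((φ i : Fin d → ℝ) ⬝ᵥ v) • ((v : Fin d → ℝ) ⬝ᵥ (φ i : Fin d → ℝ))
                = ((φ i : Fin d → ℝ) ⬝ᵥ v) ^ 2 := by
              rw [dotProduct_comm]; simp [sq, smul_eq_mul]
            rw [hq, ← sq_abs]
            exact pow_le_pow_left₀ (abs_nonneg _) hcs 2
          have hn : (∑ _i ∈ Finset.Icc 1 n, L ^ 2 : ℝ) = n * L ^ 2 := by
            rw [Finset.sum_const, Nat.card_Icc]; simp [nsmul_eq_mul]
          rw [hvv, smul_eq_mul, mul_one]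
          linarith [hsum, hn ▸ hsum]
  _ = (lam + n * L ^ 2) ^ d := by rw [Finset.prod_const, hcard]

end Helpers

/-- Elliptical potential sum bound: with `Λ_i = λI + Σ_{i'≤i} φ_{i'}φ_{i'}ᵀ` and `‖φ_i‖₂ ≤ L`,
`Σ_{i=1}^n φ_iᵀ Λ_i⁻¹ φ_i ≤ d ln(1 + nL²/λ)`. -/
theorem elliptical_potential_sum (d n : ℕ) (hd : 1 ≤ d) (L lam : ℝ) (hlam : 0 < lam)
    (φ : ℕ → EuclideanSpace ℝ (Fin d)) (hφ : ∀ i ∈ Finset.Icc 1 n, ‖φ i‖ ≤ L)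
    (Λ : ℕ → Matrix (Fin d) (Fin d) ℝ)
    (hΛ : ∀ i, Λ i = lam • (1 : Matrix (Fin d) (Fin d) ℝ)
        + ∑ i' ∈ Finset.Icc 1 i, Matrix.vecMulVec (φ i') (φ i')) :
    ∑ i ∈ Finset.Icc 1 n, (φ i : Fin d → ℝ) ⬝ᵥ (Λ i)⁻¹.mulVec (φ i)
      ≤ d * Real.log (1 + n * L ^ 2 / lam) := by
  classical
  -- positivity facts
  have hS : ∀ m, (∑ i' ∈ Finset.Icc 1 m, vecMulVec (φ i') (φ i')).PosSemidef := by
    intro m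
    exact Finset.sum_induction _ _ (fun a b ha hb => ha.add hb) Matrix.PosSemidef.zero
      (fun i _ => ell_vecMulVec_posSemidef _)
  have hPD : ∀ i, (Λ i).PosDef := fun i => by
    rw [hΛ i]; exact (ell_smul_one_posDef hlam).add_posSemidef (hS i)
  have hdetpos : ∀ i, 0 < (Λ i).det := fun i => (hPD i).det_pos
  -- per-step bound
  have hstep : ∀ k : ℕ,
      (φ (k+1) : Fin d → ℝ) ⬝ᵥ (Λ (k+1))⁻¹.mulVec (φ (k+1))
        ≤ Real.log (Λ (k+1)).det - Real.log (Λ k).det := by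
    intro k
    set t := (φ (k+1) : Fin d → ℝ) ⬝ᵥ (Λ (k+1))⁻¹.mulVec (φ (k+1)) with ht
    have hΛk : Λ k = Λ (k+1) - vecMulVec (φ (k+1)) (φ (k+1)) := by
      rw [hΛ k, hΛ (k+1), Finset.sum_Icc_succ_top (Nat.le_add_left 1 k)]
      abel
    have hdet : (Λ k).det = (Λ (k+1)).det * (1 - t) := by
      rw [hΛk]
      exact ell_det_sub_vecMulVec (hdetpos (k+1)).ne'.isUnit _
    have hr : (Λ k).det / (Λ (k+1)).det = 1 - t := by
      rw [hdet, mul_comm]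
      exact mul_div_cancel_right₀ _ (hdetpos (k+1)).ne'
    have hlog : Real.log ((Λ k).det / (Λ (k+1)).det)
        ≤ (Λ k).det / (Λ (k+1)).det - 1 :=
      Real.log_le_sub_one_of_pos (div_pos (hdetpos k) (hdetpos (k+1)))
    rw [Real.log_div (hdetpos k).ne' (hdetpos (k+1)).ne', hr] at hlog
    linarith
  -- telescoping sum
  have hsum : ∑ i ∈ Finset.Icc 1 n, (φ i : Fin d → ℝ) ⬝ᵥ (Λ i)⁻¹.mulVec (φ i)
      ≤ Real.log (Λ n).det - Real.log (Λ 0).det := by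
    have hIcc : ∑ i ∈ Finset.Icc 1 n, (φ i : Fin d → ℝ) ⬝ᵥ (Λ i)⁻¹.mulVec (φ i)
        = ∑ k ∈ Finset.range n, (φ (1+k) : Fin d → ℝ) ⬝ᵥ (Λ (1+k))⁻¹.mulVec (φ (1+k)) := by
      rw [← Finset.Ico_add_one_right_eq_Icc, Finset.sum_Ico_eq_sum_range]
      simp
    rw [hIcc]
    calc ∑ k ∈ Finset.range n, (φ (1+k) : Fin d → ℝ) ⬝ᵥ (Λ (1+k))⁻¹.mulVec (φ (1+k))
        ≤ ∑ k ∈ Finset.range n, (Real.log (Λ (k+1)).det - Real.log (Λ k).det) := by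
          apply Finset.sum_le_sum
          intro k _
          rw [add_comm 1 k]
          exact hstep k
      _ = Real.log (Λ n).det - Real.log (Λ 0).det :=
          Finset.sum_range_sub (fun i => Real.log (Λ i).det) n
  refine hsum.trans ?_
  -- final determinant bound
  have hdetn : (Λ n).det ≤ (lam + n * L ^ 2) ^ d := by
    rw [hΛ n]
    exact ell_det_le n lam φ L hφ (hΛ n ▸ hPD n)
  have hpos : (0:ℝ) < lam + n * L ^ 2 := by positivity
  have hg0 : Real.log (Λ 0).det = d * Real.log lam := by
    have h0 : (Λ 0).det = lam ^ d := by
      rw [hΛ 0]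
      simp [Matrix.det_smul]
    rw [h0, Real.log_pow]
  have hgn : Real.log (Λ n).det ≤ d * Real.log (lam + n * L ^ 2) := by
    have h := Real.log_le_log (hdetpos n) hdetn
    rwa [Real.log_pow] at h
  have hfrac : 1 + (n:ℝ) * L ^ 2 / lam = (lam + n * L ^ 2) / lam := by
    field_simp
  rw [hfrac, Real.log_div hpos.ne' hlam.ne', mul_sub]
  linarith
end

section
/- Under the finite linear-MDP value-iteration setting below with H ≥ 2, the total variation of the inhomogeneous optimal value functions is bounded by a polynomial in the feature dimension only: Σ_{h=1}^{H−1} ‖V_h − V_{h+1}‖_∞ ≤ 2·d, where ‖v‖_∞ = max_{s∈S} |v(s)|. -/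
open scoped RealInnerProductSpace

section Aux

open Matrix Polynomial

private lemma tv_root_has_eigvec {d : ℕ} (M : Matrix (Fin d) (Fin d) ℂ) (μ : ℂ)
    (h : M.charpoly.IsRoot μ) : ∃ v, v ≠ 0 ∧ M.mulVec v = μ • v := by
  have h1 : M.charpoly.eval μ = (μ • (1 : Matrix (Fin d) (Fin d) ℂ) - M).det := by
    rw [Matrix.charpoly]
    show (Polynomial.evalRingHom μ) _ = _
    rw [RingHom.map_det]
    congr 1
    ext i j
    by_cases hij : i = j <;>
      simp [hij, charmatrix_apply, Matrix.one_apply, Matrix.diagonal_apply]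
  have h2 : (μ • (1 : Matrix (Fin d) (Fin d) ℂ) - M).det = 0 := by
    rw [← h1]; exact h
  obtain ⟨v, hv0, hv⟩ := (Matrix.exists_mulVec_eq_zero_iff).mpr h2
  refine ⟨v, hv0, ?_⟩
  rw [Matrix.sub_mulVec, Matrix.smul_mulVec, Matrix.one_mulVec, sub_eq_zero] at hv
  exact hv.symm

/-- If a product `P * W` of an `m × d` and a `d × m` real matrix has nonnegative entries and
row sums at most `1`, then its trace is at most `d`. -/
private lemma tv_trace_mul_le {m d : ℕ} (P : Matrix (Fin m) (Fin d) ℝ)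
    (W : Matrix (Fin d) (Fin m) ℝ)
    (h0 : ∀ i j, 0 ≤ (P * W) i j) (h1 : ∀ i, ∑ j, (P * W) i j ≤ 1) :
    Matrix.trace (P * W) ≤ d := by
  set B : Matrix (Fin m) (Fin m) ℝ := P * W with hB
  set P' : Matrix (Fin m) (Fin d) ℂ := P.map Complex.ofRealHom with hP'
  set W' : Matrix (Fin d) (Fin m) ℂ := W.map Complex.ofRealHom with hW'
  set C : Matrix (Fin d) (Fin d) ℂ := W' * P' with hC
  have hBmap : B.map Complex.ofRealHom = P' * W' := by
    rw [hB, hP', hW', Matrix.map_mul]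
  have htr : ((Matrix.trace B : ℝ) : ℂ) = Matrix.trace C := by
    have : ((Matrix.trace B : ℝ) : ℂ) = Matrix.trace (B.map Complex.ofRealHom) := by
      simp [Matrix.trace, Matrix.diag, Matrix.map_apply]
    rw [this, hBmap, Matrix.trace_mul_comm]
  have hroots : Matrix.trace C = C.charpoly.roots.sum := Matrix.trace_eq_sum_roots_charpoly C
  have hbound : ∀ μ ∈ C.charpoly.roots, ‖μ‖ ≤ 1 := by
    intro μ hμ
    have hroot : C.charpoly.IsRoot μ := (Polynomial.isRoot_of_mem_roots hμ)
    rcases eq_or_ne μ 0 with h' | h'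
    · simp [h']
    obtain ⟨v, hv0, hv⟩ := tv_root_has_eigvec C μ hroot
    set u : Fin m → ℂ := P'.mulVec v with hu
    have hBu : (P' * W').mulVec u = μ • u := by
      rw [hu, Matrix.mulVec_mulVec, Matrix.mul_assoc, ← Matrix.mulVec_mulVec, ← hC, hv,
        Matrix.mulVec_smul]
    have hu0 : u ≠ 0 := by
      intro h0'
      have : C.mulVec v = 0 := by
        rw [hC, ← Matrix.mulVec_mulVec, ← hu, h0', Matrix.mulVec_zero]
      rw [hv] at this
      exact hv0 (by simpa [h'] using this)
    have heig : Module.End.HasEigenvalue (Matrix.toLin' (P' * W')) μ := by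
      apply Module.End.hasEigenvalue_of_hasEigenvector (x := u)
      refine ⟨Module.End.mem_eigenspace_iff.mpr ?_, hu0⟩
      rw [Matrix.toLin'_apply]; exact hBu
    obtain ⟨k, hk⟩ := eigenvalue_mem_ball heig
    rw [Metric.mem_closedBall] at hk
    have hentry : ∀ i j, (P' * W') i j = ((B i j : ℝ) : ℂ) := by
      intro i j
      rw [← hBmap]; rfl
    have hnorm : ∀ i j, ‖(P' * W') i j‖ = B i j := by
      intro i j
      rw [hentry]
      simp [Complex.norm_real, abs_of_nonneg (h0 i j)]
    calc ‖μ‖ ≤ ‖(P' * W') k k‖ + dist μ ((P' * W') k k) := by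
          simpa [dist_eq_norm] using norm_le_norm_add_norm_sub' μ ((P' * W') k k)
      _ ≤ B k k + ∑ j ∈ Finset.univ.erase k, ‖(P' * W') k j‖ := by
          rw [hnorm]; gcongr
      _ = B k k + ∑ j ∈ Finset.univ.erase k, B k j := by
          congr 1; exact Finset.sum_congr rfl fun j _ => hnorm k j
      _ = ∑ j, B k j := by
          rw [Finset.add_sum_erase _ _ (Finset.mem_univ k)]
      _ ≤ 1 := h1 k
  have hcard : (Multiset.card C.charpoly.roots : ℕ) ≤ d := by
    have := Polynomial.card_roots' C.charpoly
    rwa [Matrix.charpoly_natDegree_eq_dim, Fintype.card_fin] at this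
  have htrre : Matrix.trace B = (C.charpoly.roots.map Complex.re).sum := by
    have heq := htr.trans hroots
    have hre : (((Matrix.trace B : ℝ) : ℂ)).re = Matrix.trace B := Complex.ofReal_re _
    rw [← hre, heq]
    induction C.charpoly.roots using Multiset.induction with
    | empty => simp
    | cons a s ih => simp [ih]
  rw [htrre]
  calc (C.charpoly.roots.map Complex.re).sum ≤ (C.charpoly.roots.map (fun _ => (1:ℝ))).sum := by
        apply Multiset.sum_map_le_sum_map
        intro μ hμ
        exact (Complex.re_le_norm μ).trans (hbound μ hμ)
    _ = (Multiset.card C.charpoly.roots : ℝ) := by simp [Multiset.map_const']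
    _ ≤ d := by exact_mod_cast hcard

end Aux

/-- Structural total-variation lemma: in a finite linear MDP with features of dimension `d`,
total rewards bounded by `1`, and value functions defined by backward induction,
`Σ_{h=1}^{H-1} ‖V_h - V_{h+1}‖_∞ ≤ 2d`. -/
theorem total_variation_le (S A : Type*) [Fintype S] [Nonempty S] [Fintype A] [Nonempty A]
    (d H : ℕ) (hd : 1 ≤ d) (hH : 2 ≤ H)
    (φ : S → A → EuclideanSpace ℝ (Fin d)) (μ : S → EuclideanSpace ℝ (Fin d))
    (hprob_nonneg : ∀ s a s', 0 ≤ ⟪φ s a, μ s'⟫)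
    (hprob_sum : ∀ s a, ∑ s', ⟪φ s a, μ s'⟫ = 1)
    (r : S → A → ℝ) (hr : ∀ s a, 0 ≤ r s a)
    (V : ℕ → S → ℝ)
    (hVend : ∀ s, V (H + 1) s = 0)
    (hVrec : ∀ h, 1 ≤ h → h ≤ H → ∀ s,
      V h s = Finset.univ.sup' Finset.univ_nonempty
        (fun a => r s a + ∑ s', ⟪φ s a, μ s'⟫ * V (h + 1) s'))
    (hV1 : ∀ s, V 1 s ≤ 1) :
    ∑ h ∈ Finset.Icc 1 (H - 1),
        (Finset.univ.sup' Finset.univ_nonempty fun s => |V h s - V (h + 1) s|)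
      ≤ 2 * d := by
  classical
  have hinner : ∀ s a s', (⟪φ s a, μ s'⟫ : ℝ) = ∑ j, φ s a j * μ s' j := by
    intro s a s'
    simp [PiLp.inner_apply, RCLike.inner_apply, conj_trivial]
    exact Finset.sum_congr rfl fun _ _ => mul_comm _ _
  -- monotonicity : V (k+1) ≤ V k for 1 ≤ k ≤ H
  have hmono : ∀ m k, H ≤ k + m → 1 ≤ k → k ≤ H → ∀ s, V (k + 1) s ≤ V k s := by
    intro m
    induction m with
    | zero =>
      intro k hm h1 h2 s
      have hk : k = H := by omega
      have hVend' : ∀ s', V (k + 1) s' = 0 := by rw [hk]; exact hVend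
      rw [hVrec k h1 h2 s, hVend' s]
      refine le_trans ?_ (Finset.le_sup'
        (fun a => r s a + ∑ s', ⟪φ s a, μ s'⟫ * V (k + 1) s')
        (Finset.mem_univ (Classical.arbitrary A)))
      have hz : ∑ s', ⟪φ s (Classical.arbitrary A), μ s'⟫ * V (k + 1) s' = 0 := by
        apply Finset.sum_eq_zero
        intro s' _
        rw [hVend' s', mul_zero]
      rw [hz, add_zero]
      exact hr s _
    | succ m ih =>
      intro k hm h1 h2 s
      by_cases hk : H ≤ k + m
      · exact ih k hk h1 h2 s
      have hk1 : k + 1 ≤ H := by omega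
      have ih' : ∀ s', V (k + 1 + 1) s' ≤ V (k + 1) s' :=
        fun s' => ih (k + 1) (by omega) (by omega) hk1 s'
      rw [hVrec k h1 h2 s, hVrec (k + 1) (by omega) hk1 s]
      apply Finset.sup'_le
      intro a _
      refine le_trans ?_ (Finset.le_sup' _ (Finset.mem_univ a))
      have hsum : ∑ s', ⟪φ s a, μ s'⟫ * V (k + 1 + 1) s' ≤
          ∑ s', ⟪φ s a, μ s'⟫ * V (k + 1) s' := by
        apply Finset.sum_le_sum
        intro s' _
        exact mul_le_mul_of_nonneg_left (ih' s') (hprob_nonneg s a s')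
      linarith
  have hmono' : ∀ k, 1 ≤ k → k ≤ H → ∀ s, V (k + 1) s ≤ V k s :=
    fun k h1 h2 => hmono H k (by omega) h1 h2
  have hV2 : ∀ s, V 2 s ≤ 1 := fun s => le_trans (hmono' 1 le_rfl (by omega) s) (hV1 s)
  -- choose maximizing states and actions
  choose σ hσmem hσ using fun h : ℕ =>
    Finset.exists_mem_eq_sup' (Finset.univ_nonempty (α := S))
      (fun s => |V h s - V (h + 1) s|)
  choose α hαmem hα using fun h : ℕ =>
    Finset.exists_mem_eq_sup' (Finset.univ_nonempty (α := A))
      (fun a => r (σ h) a + ∑ s', ⟪φ (σ h) a, μ s'⟫ * V (h + 1) s')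
  -- key per-step bound
  have hkey : ∀ h, 1 ≤ h → h ≤ H - 1 →
      (Finset.univ.sup' Finset.univ_nonempty fun s => |V h s - V (h + 1) s|) ≤
        ∑ s', ⟪φ (σ h) (α h), μ s'⟫ * (V (h + 1) s' - V (h + 1 + 1) s') := by
    intro h h1 h2
    have hhH : h ≤ H := by omega
    have hmn := hmono' h h1 hhH (σ h)
    rw [hσ h, abs_of_nonneg (by linarith)]
    have e1 : V h (σ h) = r (σ h) (α h) + ∑ s', ⟪φ (σ h) (α h), μ s'⟫ * V (h + 1) s' := by
      rw [hVrec h h1 hhH (σ h)]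
      exact hα h
    have e2 : r (σ h) (α h) + ∑ s', ⟪φ (σ h) (α h), μ s'⟫ * V (h + 1 + 1) s' ≤
        V (h + 1) (σ h) := by
      rw [hVrec (h + 1) (by omega) (by omega) (σ h)]
      exact Finset.le_sup'
        (fun a => r (σ h) a + ∑ s', ⟪φ (σ h) a, μ s'⟫ * V (h + 1 + 1) s')
        (Finset.mem_univ (α h))
    have e3 : ∑ s', ⟪φ (σ h) (α h), μ s'⟫ * (V (h + 1) s' - V (h + 1 + 1) s') =
        (∑ s', ⟪φ (σ h) (α h), μ s'⟫ * V (h + 1) s') -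
          ∑ s', ⟪φ (σ h) (α h), μ s'⟫ * V (h + 1 + 1) s' := by
      rw [← Finset.sum_sub_distrib]
      exact Finset.sum_congr rfl fun s' _ => by ring
    linarith
  -- matrix setup
  set Pm : Matrix (Fin (H - 1)) (Fin d) ℝ :=
    fun i j => φ (σ (i.1 + 1)) (α (i.1 + 1)) j with hPm
  set Wm : Matrix (Fin d) (Fin (H - 1)) ℝ :=
    fun j i => ∑ s', μ s' j * (V (i.1 + 1 + 1) s' - V (i.1 + 1 + 1 + 1) s') with hWm
  have hentry : ∀ i i' : Fin (H - 1), (Pm * Wm) i i' =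
      ∑ s', ⟪φ (σ (i.1 + 1)) (α (i.1 + 1)), μ s'⟫ *
        (V (i'.1 + 1 + 1) s' - V (i'.1 + 1 + 1 + 1) s') := by
    intro i i'
    rw [Matrix.mul_apply]
    calc ∑ j, Pm i j * Wm j i'
        = ∑ j, ∑ s', φ (σ (i.1 + 1)) (α (i.1 + 1)) j * μ s' j *
            (V (i'.1 + 1 + 1) s' - V (i'.1 + 1 + 1 + 1) s') := by
          refine Finset.sum_congr rfl fun j _ => ?_
          rw [hPm, hWm, Finset.mul_sum]
          exact Finset.sum_congr rfl fun s' _ => by ring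
      _ = ∑ s', ∑ j, φ (σ (i.1 + 1)) (α (i.1 + 1)) j * μ s' j *
            (V (i'.1 + 1 + 1) s' - V (i'.1 + 1 + 1 + 1) s') := Finset.sum_comm
      _ = _ := by
          refine Finset.sum_congr rfl fun s' _ => ?_
          rw [hinner, Finset.sum_mul]
  have hcnonneg : ∀ (i' : Fin (H - 1)) s', 0 ≤ V (i'.1 + 1 + 1) s' - V (i'.1 + 1 + 1 + 1) s' := by
    intro i' s'
    have := hmono' (i'.1 + 1 + 1) (by omega) (by omega : i'.1 + 1 + 1 ≤ H) s'
    linarith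
  have h0 : ∀ i i' : Fin (H - 1), 0 ≤ (Pm * Wm) i i' := by
    intro i i'
    rw [hentry]
    exact Finset.sum_nonneg fun s' _ =>
      mul_nonneg (hprob_nonneg _ _ _) (hcnonneg i' s')
  have h1 : ∀ i : Fin (H - 1), ∑ i', (Pm * Wm) i i' ≤ 1 := by
    intro i
    have hrow : ∑ i', (Pm * Wm) i i' =
        ∑ s', ⟪φ (σ (i.1 + 1)) (α (i.1 + 1)), μ s'⟫ * V 2 s' := by
      calc ∑ i', (Pm * Wm) i i'
          = ∑ i' : Fin (H - 1), ∑ s', ⟪φ (σ (i.1 + 1)) (α (i.1 + 1)), μ s'⟫ *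
              (V (i'.1 + 1 + 1) s' - V (i'.1 + 1 + 1 + 1) s') :=
            Finset.sum_congr rfl fun i' _ => hentry i i'
        _ = ∑ s', ∑ i' : Fin (H - 1), ⟪φ (σ (i.1 + 1)) (α (i.1 + 1)), μ s'⟫ *
              (V (i'.1 + 1 + 1) s' - V (i'.1 + 1 + 1 + 1) s') := Finset.sum_comm
        _ = ∑ s', ⟪φ (σ (i.1 + 1)) (α (i.1 + 1)), μ s'⟫ * V 2 s' := by
            refine Finset.sum_congr rfl fun s' _ => ?_
            rw [← Finset.mul_sum]
            congr 1
            have htel : ∑ i' : Fin (H - 1),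
                (V (i'.1 + 1 + 1) s' - V (i'.1 + 1 + 1 + 1) s') =
                V (0 + 1 + 1) s' - V ((H - 1) + 1 + 1) s' := by
              rw [Fin.sum_univ_eq_sum_range
                (fun t => V (t + 1 + 1) s' - V (t + 1 + 1 + 1) s') (H - 1)]
              exact Finset.sum_range_sub' (fun t => V (t + 1 + 1) s') (H - 1)
            rw [htel]
            have e0 : (0:ℕ) + 1 + 1 = 2 := by norm_num
            have eH : H - 1 + 1 + 1 = H + 1 := by omega
            rw [e0, eH, hVend, sub_zero]
    rw [hrow]
    calc ∑ s', ⟪φ (σ (i.1 + 1)) (α (i.1 + 1)), μ s'⟫ * V 2 s'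
        ≤ ∑ s', ⟪φ (σ (i.1 + 1)) (α (i.1 + 1)), μ s'⟫ * 1 := by
          refine Finset.sum_le_sum fun s' _ => ?_
          exact mul_le_mul_of_nonneg_left (hV2 s') (hprob_nonneg _ _ _)
      _ = 1 := by
          simp only [mul_one]
          exact hprob_sum _ _
  have htrace : Matrix.trace (Pm * Wm) ≤ d := tv_trace_mul_le Pm Wm h0 h1
  -- reindex the goal sum
  have hIcc : ∑ h ∈ Finset.Icc 1 (H - 1),
      (Finset.univ.sup' Finset.univ_nonempty fun s => |V h s - V (h + 1) s|) =
      ∑ i ∈ Finset.range (H - 1),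
        (Finset.univ.sup' Finset.univ_nonempty fun s => |V (i + 1) s - V (i + 1 + 1) s|) := by
    have hmm : H - 1 + 1 = H := by omega
    rw [← Finset.Ico_add_one_right_eq_Icc, hmm, Finset.sum_Ico_eq_sum_range]
    refine Finset.sum_congr rfl fun i _ => ?_
    rw [Nat.add_comm 1 i]
  rw [hIcc, ← Fin.sum_univ_eq_sum_range
    (fun i => Finset.univ.sup' Finset.univ_nonempty fun s => |V (i + 1) s - V (i + 1 + 1) s|)
    (H - 1)]
  have hfinal : ∑ i : Fin (H - 1),
      (Finset.univ.sup' Finset.univ_nonempty fun s => |V (i.1 + 1) s - V (i.1 + 1 + 1) s|) ≤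
      Matrix.trace (Pm * Wm) := by
    rw [Matrix.trace]
    refine Finset.sum_le_sum fun i _ => ?_
    rw [Matrix.diag]
    rw [hentry i i]
    exact hkey (i.1 + 1) (by omega) (by omega)
  refine le_trans hfinal (le_trans htrace ?_)
  have : (d:ℝ) ≤ 2 * d := by
    have : (0:ℝ) ≤ d := Nat.cast_nonneg d
    linarith
  exact_mod_cast this
end

section
/- Under the finite linear-MDP value-iteration setting below with H ≥ 2, for every h ∈ {1, …, H} one has ‖V_h − V_{h+1}‖_∞ ≤ (2·d + 1)/(H − h + 1), where ‖v‖_∞ = max_{s∈S} |v(s)|. -/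
open scoped RealInnerProductSpace

open Polynomial in
lemma aux_trace_le (n d : ℕ) (F : Matrix (Fin n) (Fin d) ℝ) (G : Matrix (Fin d) (Fin n) ℝ)
    (h0 : ∀ i j, 0 ≤ (F * G) i j) (h1 : ∀ i, ∑ j, (F * G) i j ≤ 1) :
    Matrix.trace (F * G) ≤ d := by
  classical
  set Fc : Matrix (Fin n) (Fin d) ℂ := F.map (algebraMap ℝ ℂ) with hFcdef
  set Gc : Matrix (Fin d) (Fin n) ℂ := G.map (algebraMap ℝ ℂ) with hGcdef
  set B : Matrix (Fin d) (Fin d) ℂ := Gc * Fc with hBdef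
  have hAc : (F * G).map (algebraMap ℝ ℂ) = Fc * Gc := Matrix.map_mul
  -- every root of the charpoly of B has real part ≤ 1
  have hroot : ∀ z ∈ B.charpoly.roots, z.re ≤ 1 := by
    intro z hz
    have habs : ‖z‖ ≤ 1 := by
      rcases eq_or_ne z 0 with rfl | hz0
      · simp
      have hev : Polynomial.eval z B.charpoly = 0 := (Polynomial.isRoot_of_mem_roots hz)
      have hdet : (Matrix.diagonal (fun _ : Fin d => z) - B).det = 0 := by
        have hmap : (Matrix.charmatrix B).map (Polynomial.evalRingHom z) =
            Matrix.diagonal (fun _ : Fin d => z) - B := by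
          ext i j
          by_cases hij : i = j
          · subst hij
            simp [Matrix.charmatrix_apply_eq, Matrix.map_apply, Matrix.diagonal_apply_eq,
              Matrix.sub_apply]
          · simp [Matrix.charmatrix_apply_ne _ _ _ hij, Matrix.map_apply,
              Matrix.diagonal_apply_ne _ hij, Matrix.sub_apply]
        have := RingHom.map_det (Polynomial.evalRingHom z) (Matrix.charmatrix B)
        rw [RingHom.mapMatrix_apply, hmap] at this
        rw [← this]
        simpa [Matrix.charpoly] using hev
      obtain ⟨w, hw0, hw⟩ := (Matrix.exists_mulVec_eq_zero_iff).2 hdet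
      have hBw : B.mulVec w = z • w := by
        have h' := hw
        rw [Matrix.sub_mulVec] at h'
        have hdiag : (Matrix.diagonal (fun _ : Fin d => z)).mulVec w = z • w := by
          ext i; simp [Matrix.mulVec_diagonal]
        rw [hdiag] at h'
        have := sub_eq_zero.mp h'
        exact this.symm
      set v : Fin n → ℂ := Fc.mulVec w with hvdef
      have hv0 : v ≠ 0 := by
        intro hveq
        apply hw0
        have : B.mulVec w = 0 := by
          rw [hBdef, ← Matrix.mulVec_mulVec, ← hvdef, hveq, Matrix.mulVec_zero]
        rw [hBw] at this
        have := smul_eq_zero.mp this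
        rcases this with h | h
        · exact absurd h hz0
        · exact h
      have hAv : (Fc * Gc).mulVec v = z • v := by
        have step1 : (Fc * Gc).mulVec v = Fc.mulVec (B.mulVec w) := by
          rw [hvdef, hBdef, Matrix.mulVec_mulVec, Matrix.mulVec_mulVec, Matrix.mul_assoc]
        rw [step1, hBw, Matrix.mulVec_smul]
      obtain ⟨j0, hj0⟩ := Function.ne_iff.mp hv0
      haveI : Nonempty (Fin n) := ⟨j0⟩
      obtain ⟨i, _, hi⟩ := Finset.exists_max_image Finset.univ
        (fun i => ‖v i‖) Finset.univ_nonempty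
      have hvi : 0 < ‖v i‖ := by
        have h1 : 0 < ‖v j0‖ := by
          simpa [norm_pos_iff] using (by simpa using hj0 : v j0 ≠ 0)
        exact lt_of_lt_of_le h1 (hi j0 (Finset.mem_univ j0))
      have hzvi : ‖z‖ * ‖v i‖ ≤ ‖v i‖ := by
        have hcoord : z * v i = ∑ j, ((F * G) i j : ℂ) * v j := by
          have := congrFun hAv i
          rw [Pi.smul_apply, smul_eq_mul] at this
          rw [← this, ← hAc]
          simp [Matrix.mulVec, dotProduct, Matrix.map_apply]
        calc ‖z‖ * ‖v i‖ = ‖z * v i‖ := (norm_mul _ _).symm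
          _ = ‖∑ j, ((F * G) i j : ℂ) * v j‖ := by rw [hcoord]
          _ ≤ ∑ j, ‖((F * G) i j : ℂ) * v j‖ := norm_sum_le _ _
          _ ≤ ∑ j, (F * G) i j * ‖v i‖ := by
              apply Finset.sum_le_sum
              intro j _
              rw [norm_mul, Complex.norm_real, Real.norm_eq_abs, abs_of_nonneg (h0 i j)]
              exact mul_le_mul_of_nonneg_left (hi j (Finset.mem_univ j)) (h0 i j)
          _ = (∑ j, (F * G) i j) * ‖v i‖ := by rw [Finset.sum_mul]
          _ ≤ 1 * ‖v i‖ :=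
              mul_le_mul_of_nonneg_right (h1 i) (le_of_lt hvi)
          _ = ‖v i‖ := one_mul _
      have := (mul_le_iff_le_one_left hvi).mp (by linarith [hzvi])
      linarith [this]
    calc z.re ≤ ‖z‖ := Complex.re_le_norm z
      _ ≤ 1 := habs
  -- trace computation
  have htr : Matrix.trace (F * G) = Matrix.trace (G * F) := Matrix.trace_mul_comm F G
  have htrB : Matrix.trace B = ((Matrix.trace (G * F) : ℝ) : ℂ) := by
    rw [hBdef, ← Matrix.map_mul]
    simp [Matrix.trace, Matrix.diag, Matrix.map_apply]
  have hsum : Matrix.trace B = B.charpoly.roots.sum := Matrix.trace_eq_sum_roots_charpoly B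
  have hcard : (Multiset.card B.charpoly.roots : ℕ) = d := by
    have hsplit : B.charpoly.Splits := IsAlgClosed.splits B.charpoly
    have hc := Polynomial.splits_iff_card_roots.mp hsplit
    rw [hc, Matrix.charpoly_natDegree_eq_dim, Fintype.card_fin]
  have hre : Matrix.trace (G * F) = (B.charpoly.roots.map Complex.re).sum := by
    have h1 := congrArg Complex.re (htrB.symm.trans hsum)
    rw [Complex.ofReal_re] at h1
    rw [h1]
    have := map_multiset_sum Complex.reAddGroupHom B.charpoly.roots
    simpa [Complex.coe_reAddGroupHom] using this
  have hbound : (B.charpoly.roots.map Complex.re).sum ≤ (d : ℝ) := by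
    calc (B.charpoly.roots.map Complex.re).sum
        ≤ (B.charpoly.roots.map (fun _ => (1 : ℝ))).sum := by
          apply Multiset.sum_map_le_sum_map
          intro z hz
          exact hroot z hz
      _ = (Multiset.card B.charpoly.roots : ℝ) := by
          simp [Multiset.map_const']
      _ = (d : ℝ) := by rw [hcard]
  rw [htr, hre]
  exact hbound

/-- Lemma B.7 (up to an additive constant): in a finite linear MDP with total rewards bounded
by `1`, for every `h ∈ {1,…,H}`, `‖V_h - V_{h+1}‖_∞ ≤ (2d+1)/(H-h+1)`. -/
theorem value_diff_le (S A : Type*) [Fintype S] [Nonempty S] [Fintype A] [Nonempty A]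
    (d H : ℕ) (hd : 1 ≤ d) (hH : 2 ≤ H)
    (φ : S → A → EuclideanSpace ℝ (Fin d)) (μ : S → EuclideanSpace ℝ (Fin d))
    (hprob_nonneg : ∀ s a s', 0 ≤ ⟪φ s a, μ s'⟫)
    (hprob_sum : ∀ s a, ∑ s', ⟪φ s a, μ s'⟫ = 1)
    (r : S → A → ℝ) (hr : ∀ s a, 0 ≤ r s a)
    (V : ℕ → S → ℝ)
    (hVend : ∀ s, V (H + 1) s = 0)
    (hVrec : ∀ h, 1 ≤ h → h ≤ H → ∀ s,
      V h s = Finset.univ.sup' Finset.univ_nonempty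
        (fun a => r s a + ∑ s', ⟪φ s a, μ s'⟫ * V (h + 1) s'))
    (hV1 : ∀ s, V 1 s ≤ 1) :
    ∀ h, 1 ≤ h → h ≤ H →
      (Finset.univ.sup' Finset.univ_nonempty fun s => |V h s - V (h + 1) s|)
        ≤ (2 * d + 1) / ((H : ℝ) - h + 1) := by
  classical
  -- base monotonicity at the top level
  have hbase : ∀ s, V (H + 1) s ≤ V H s := by
    intro s
    obtain ⟨a⟩ := ‹Nonempty A›
    have h0 : (∑ s', ⟪φ s a, μ s'⟫ * V (H + 1) s') = 0 := by
      apply Finset.sum_eq_zero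
      intro s' _
      rw [hVend s', mul_zero]
    calc V (H + 1) s = 0 := hVend s
      _ ≤ r s a + ∑ s', ⟪φ s a, μ s'⟫ * V (H + 1) s' := by rw [h0, add_zero]; exact hr s a
      _ ≤ V H s := by
          rw [hVrec H (by omega) le_rfl s]
          exact Finset.le_sup' (fun a => r s a + ∑ s', ⟪φ s a, μ s'⟫ * V (H + 1) s')
            (Finset.mem_univ a)
  -- one-step monotonicity, by downward induction
  have mono : ∀ m k, 1 ≤ k → k ≤ H → H ≤ k + m → ∀ s, V (k + 1) s ≤ V k s := by
    intro m
    induction m with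
    | zero =>
      intro k hk1 hkH hHk s
      have : k = H := by omega
      subst this
      exact hbase s
    | succ m ih =>
      intro k hk1 hkH hHk s
      by_cases hkH' : k = H
      · subst hkH'; exact hbase s
      · have hk1H : k + 1 ≤ H := by omega
        have ih' := ih (k + 1) (by omega) hk1H (by omega)
        rw [hVrec k hk1 hkH s, hVrec (k + 1) (by omega) hk1H s]
        apply Finset.sup'_mono_fun
        intro a _
        apply add_le_add le_rfl
        apply Finset.sum_le_sum
        intro s' _
        exact mul_le_mul_of_nonneg_left (ih' s') (hprob_nonneg s a s')
  have mono1 : ∀ k, 1 ≤ k → k ≤ H → ∀ s, V (k + 1) s ≤ V k s :=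
    fun k hk1 hkH => mono H k hk1 hkH (by omega)
  -- chain monotonicity
  have chain : ∀ j k, 1 ≤ k → k + j ≤ H + 1 → ∀ s, V (k + j) s ≤ V k s := by
    intro j
    induction j with
    | zero => intro k _ _ s; exact le_rfl
    | succ j ih =>
      intro k hk1 hkj s
      calc V (k + (j + 1)) s = V ((k + j) + 1) s := by rw [Nat.add_assoc]
        _ ≤ V (k + j) s := mono1 (k + j) (by omega) (by omega) s
        _ ≤ V k s := ih k hk1 (by omega) s
  have nonneg : ∀ k, 1 ≤ k → k ≤ H + 1 → ∀ s, 0 ≤ V k s := by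
    intro k hk1 hkH s
    have h2 := chain (H + 1 - k) k hk1 (by omega) s
    rw [show k + (H + 1 - k) = H + 1 by omega] at h2
    rw [hVend s] at h2
    exact h2
  have le_one : ∀ k, 1 ≤ k → k ≤ H + 1 → ∀ s, V k s ≤ 1 := by
    intro k hk1 hkH s
    have h2 := chain (k - 1) 1 le_rfl (by omega) s
    rw [show 1 + (k - 1) = k by omega] at h2
    exact h2.trans (hV1 s)
  -- difference function and its max over next-state distributions
  set D : ℕ → S → ℝ := fun k s => V k s - V (k + 1) s with hD
  set g : ℕ → S × A → ℝ := fun j p => ∑ s', ⟪φ p.1 p.2, μ s'⟫ * D j s' with hg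
  set ε : ℕ → ℝ := fun j => Finset.univ.sup' Finset.univ_nonempty (g j) with hε
  have Dnn : ∀ j, 1 ≤ j → j ≤ H → ∀ s, 0 ≤ D j s :=
    fun j hj1 hjH s => sub_nonneg.mpr (mono1 j hj1 hjH s)
  -- key recursive bound
  have key : ∀ k, 1 ≤ k → k + 1 ≤ H → ∀ s, D k s ≤ ε (k + 1) := by
    intro k hk1 hk2 s
    obtain ⟨a₀, _, ha₀⟩ := Finset.exists_mem_eq_sup' Finset.univ_nonempty
      (fun a => r s a + ∑ s', ⟪φ s a, μ s'⟫ * V (k + 1) s')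
    have hVk : V k s = r s a₀ + ∑ s', ⟪φ s a₀, μ s'⟫ * V (k + 1) s' := by
      rw [hVrec k hk1 (by omega) s]; exact ha₀
    have hVk1 : r s a₀ + ∑ s', ⟪φ s a₀, μ s'⟫ * V (k + 1 + 1) s' ≤ V (k + 1) s := by
      rw [hVrec (k + 1) (by omega) hk2 s]
      exact Finset.le_sup' (fun a => r s a + ∑ s', ⟪φ s a, μ s'⟫ * V (k + 1 + 1) s')
        (Finset.mem_univ a₀)
    have hstep : D k s ≤ g (k + 1) (s, a₀) := by
      have hsub : (r s a₀ + ∑ s', ⟪φ s a₀, μ s'⟫ * V (k + 1) s')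
          - (r s a₀ + ∑ s', ⟪φ s a₀, μ s'⟫ * V (k + 1 + 1) s')
          = ∑ s', ⟪φ s a₀, μ s'⟫ * (V (k + 1) s' - V (k + 1 + 1) s') := by
        simp only [mul_sub, Finset.sum_sub_distrib]
        ring
      have : D k s ≤ (r s a₀ + ∑ s', ⟪φ s a₀, μ s'⟫ * V (k + 1) s')
          - (r s a₀ + ∑ s', ⟪φ s a₀, μ s'⟫ * V (k + 1 + 1) s') := by
        rw [hD]; simp only []
        rw [← hVk]
        linarith [hVk1]
      rw [hsub] at this
      exact this
    exact hstep.trans (Finset.le_sup' _ (Finset.mem_univ (s, a₀)))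
  -- g is at most the max of D
  have gle : ∀ j (p : S × A), g j p ≤ Finset.univ.sup' Finset.univ_nonempty (D j) := by
    intro j p
    calc g j p ≤ ∑ s', ⟪φ p.1 p.2, μ s'⟫ * Finset.univ.sup' Finset.univ_nonempty (D j) := by
          apply Finset.sum_le_sum
          intro s' _
          exact mul_le_mul_of_nonneg_left (Finset.le_sup' _ (Finset.mem_univ s'))
            (hprob_nonneg p.1 p.2 s')
      _ = (∑ s', ⟪φ p.1 p.2, μ s'⟫) * Finset.univ.sup' Finset.univ_nonempty (D j) := by
          rw [Finset.sum_mul]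
      _ = _ := by rw [hprob_sum p.1 p.2, one_mul]
  -- ε is monotone
  have εmono : ∀ j, 1 ≤ j → j + 1 ≤ H → ε j ≤ ε (j + 1) := by
    intro j hj1 hj2
    apply Finset.sup'_le
    intro p _
    calc g j p ≤ Finset.univ.sup' Finset.univ_nonempty (D j) := gle j p
      _ ≤ ε (j + 1) := Finset.sup'_le _ _ (fun s _ => key j hj1 hj2 s)
  have εchain : ∀ m j, 1 ≤ j → j + m ≤ H → ε j ≤ ε (j + m) := by
    intro m
    induction m with
    | zero => intro j _ _; exact le_rfl
    | succ m ih =>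
      intro j hj1 hjm
      calc ε j ≤ ε (j + m) := ih j hj1 (by omega)
        _ ≤ ε ((j + m) + 1) := εmono (j + m) (by omega) (by omega)
        _ = ε (j + (m + 1)) := by rw [Nat.add_assoc]
  -- main proof
  intro h h1 hhH
  by_cases hhH' : h = H
  · subst hhH'
    have hden : (h : ℝ) - (h : ℕ) + 1 = 1 := by simp
    rw [hden, div_one]
    apply Finset.sup'_le
    intro s _
    rw [hVend s, sub_zero, abs_of_nonneg (nonneg h (by omega) (by omega) s)]
    have := le_one h (by omega) (by omega) s
    have hd' : (1 : ℝ) ≤ (d : ℝ) := by exact_mod_cast hd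
    linarith
  · -- h < H
    have hhlt : h + 1 ≤ H := by omega
    set n : ℕ := H - h with hn
    have hn1 : 1 ≤ n := by omega
    -- argmax pairs
    have hptex : ∀ j : ℕ, ∃ p : S × A, ε j = g j p := by
      intro j
      obtain ⟨p, _, hp⟩ := Finset.exists_mem_eq_sup' Finset.univ_nonempty (g j)
      exact ⟨p, hp⟩
    choose pt hpt using hptex
    set F : Matrix (Fin n) (Fin d) ℝ :=
      fun k i => φ (pt (h + 1 + k)).1 (pt (h + 1 + k)).2 i with hF
    set G : Matrix (Fin d) (Fin n) ℝ :=
      fun i k => ∑ s', μ s' i * D (h + 1 + (k : ℕ)) s' with hG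
    have hFG : ∀ k k' : Fin n, (F * G) k k' = g (h + 1 + k') (pt (h + 1 + k)) := by
      intro k k'
      rw [Matrix.mul_apply]
      calc ∑ i, F k i * G i k'
          = ∑ i, ∑ s', F k i * (μ s' i * D (h + 1 + (k' : ℕ)) s') := by
            apply Finset.sum_congr rfl
            intro i _
            rw [hG]; exact Finset.mul_sum _ _ _
        _ = ∑ s', ∑ i, F k i * (μ s' i * D (h + 1 + (k' : ℕ)) s') := Finset.sum_comm
        _ = g (h + 1 + k') (pt (h + 1 + k)) := by
            rw [hg]
            apply Finset.sum_congr rfl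
            intro s' _
            rw [PiLp.inner_apply]
            simp only [RCLike.inner_apply, conj_trivial]
            rw [Finset.sum_mul]
            apply Finset.sum_congr rfl
            intro i _
            rw [hF]
            ring
    have hnk : ∀ k : Fin n, h + 1 + (k : ℕ) ≤ H := by
      intro k
      have := k.2
      omega
    have h0 : ∀ k k' : Fin n, 0 ≤ (F * G) k k' := by
      intro k k'
      rw [hFG k k', hg]
      apply Finset.sum_nonneg
      intro s' _
      exact mul_nonneg (hprob_nonneg _ _ s') (Dnn _ (by omega) (hnk k') s')
    have hrow : ∀ k : Fin n, ∑ k', (F * G) k k' ≤ 1 := by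
      intro k
      have hswap : ∑ k' : Fin n, (F * G) k k'
          = ∑ s', ⟪φ (pt (h + 1 + k)).1 (pt (h + 1 + k)).2, μ s'⟫
              * ∑ k' : Fin n, D (h + 1 + (k' : ℕ)) s' := by
        calc ∑ k' : Fin n, (F * G) k k'
            = ∑ k' : Fin n, ∑ s', ⟪φ (pt (h + 1 + k)).1 (pt (h + 1 + k)).2, μ s'⟫
                * D (h + 1 + (k' : ℕ)) s' := by
              apply Finset.sum_congr rfl
              intro k' _
              rw [hFG k k', hg]
          _ = ∑ s', ∑ k' : Fin n, ⟪φ (pt (h + 1 + k)).1 (pt (h + 1 + k)).2, μ s'⟫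
                * D (h + 1 + (k' : ℕ)) s' := Finset.sum_comm
          _ = _ := by
              apply Finset.sum_congr rfl
              intro s' _
              rw [Finset.mul_sum]
      rw [hswap]
      have htel : ∀ s', ∑ k' : Fin n, D (h + 1 + (k' : ℕ)) s' = V (h + 1) s' := by
        intro s'
        have := Fin.sum_univ_eq_sum_range (fun k' => D (h + 1 + k') s') n
        rw [this]
        have := Finset.sum_range_sub' (fun i => V (h + 1 + i) s') n
        calc ∑ i ∈ Finset.range n, D (h + 1 + i) s'
            = ∑ i ∈ Finset.range n, (V (h + 1 + i) s' - V (h + 1 + (i + 1)) s') := by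
              apply Finset.sum_congr rfl
              intro i _
              rfl
          _ = V (h + 1 + 0) s' - V (h + 1 + n) s' := Finset.sum_range_sub' _ n
          _ = V (h + 1) s' := by
              rw [show h + 1 + n = H + 1 by omega, hVend s', sub_zero, Nat.add_zero]
      calc ∑ s', ⟪φ (pt (h + 1 + k)).1 (pt (h + 1 + k)).2, μ s'⟫
              * ∑ k' : Fin n, D (h + 1 + (k' : ℕ)) s'
          ≤ ∑ s', ⟪φ (pt (h + 1 + k)).1 (pt (h + 1 + k)).2, μ s'⟫ * 1 := by
            apply Finset.sum_le_sum
            intro s' _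
            apply mul_le_mul_of_nonneg_left _ (hprob_nonneg _ _ s')
            rw [htel s']
            exact le_one (h + 1) (by omega) (by omega) s'
        _ = 1 := by
            simp only [mul_one]
            exact hprob_sum _ _
    have htrace := aux_trace_le n d F G h0 hrow
    have htrsum : Matrix.trace (F * G) = ∑ k : Fin n, ε (h + 1 + (k : ℕ)) := by
      rw [Matrix.trace]
      apply Finset.sum_congr rfl
      intro k _
      rw [Matrix.diag, hFG k k, ← hpt (h + 1 + (k : ℕ))]
    have hlow : ∀ k : Fin n, ε (h + 1) ≤ ε (h + 1 + (k : ℕ)) :=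
      fun k => εchain (k : ℕ) (h + 1) (by omega) (hnk k)
    have hcard : (n : ℝ) * ε (h + 1) ≤ (d : ℝ) := by
      have := Finset.card_nsmul_le_sum (Finset.univ : Finset (Fin n))
        (fun k => ε (h + 1 + (k : ℕ))) (ε (h + 1)) (fun k _ => hlow k)
      rw [Finset.card_univ, Fintype.card_fin, nsmul_eq_mul] at this
      rw [← htrsum] at this
      exact le_trans this htrace
    have hεb : ε (h + 1) ≤ (d : ℝ) / n := by
      rw [le_div_iff₀ (by exact_mod_cast hn1 : (0 : ℝ) < (n : ℝ))]
      linarith [hcard]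
    -- conclude
    apply Finset.sup'_le
    intro s _
    have hDb : |V h s - V (h + 1) s| = D h s := abs_of_nonneg (Dnn h h1 (by omega) s)
    rw [hDb]
    have h2 : D h s ≤ (d : ℝ) / n := (key h h1 hhlt s).trans hεb
    have hcast : (H : ℝ) - h = (n : ℝ) := by
      rw [hn]
      push_cast [Nat.cast_sub hhH]
      ring
    rw [hcast]
    have hnR : (1 : ℝ) ≤ (n : ℝ) := by exact_mod_cast hn1
    have hdR : (0 : ℝ) ≤ (d : ℝ) := by positivity
    have hfrac : (d : ℝ) / n ≤ (2 * d + 1) / ((n : ℝ) + 1) := by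
      rw [div_le_div_iff₀ (by linarith) (by linarith)]
      nlinarith
    linarith [h2, hfrac]
end
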